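/- arXiv:2411.13233 — 3 statements merged into one kernel-verified Lean document; each statement's English description precedes it below -/
import Mathlib

section
/- There is a well-defined function [f^ω]: R_B(f^n; x₀, n(ω)) → R_B(f^n; x₀, n(ω)) satisfying: (i) [f^ω]([θ]) = [f^ω(θ)] for every θ ∈ π₁(Y, x₀); (ii) [f^ω] ∘ j = j ∘ f^ω, where j: π₁(Y, x₀) → R_B(f^n; x₀, n(ω)) is the natural projection; and (iii) [f^ω]^n is the identity function on R_B(f^n; x₀, n(ω)). -/
open unitInterval

/-- The homotopy lifting property with respect to all spaces (Hurewicz fibration). -/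
def IsHurewiczFibration {E B : Type} [TopologicalSpace E] [TopologicalSpace B]
    (p : C(E, B)) : Prop :=
  ∀ (X : Type) [TopologicalSpace X] (H : C(X × I, B)) (h₀ : C(X, E)),
    (∀ x, H (x, 0) = p (h₀ x)) →
      ∃ H' : C(X × I, E), (∀ x, H' (x, 0) = h₀ x) ∧ ∀ z, p (H' z) = H z

variable {E B : Type} [TopologicalSpace E] [TopologicalSpace B]

/-- Loops at `x₀` lying in the fiber of `p` through `x₀`; they represent elements of
`π₁(Y, x₀)` where `Y = p⁻¹(p x₀)`. -/
def FiberLoop (p : C(E, B)) (x₀ : E) : Type :=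
  {θ : Path x₀ x₀ // ∀ t, p (θ t) = p x₀}

/-- Two fiber loops `θ`, `θ'` are Reidemeister related over `B` (for the fiber map `g` and
base path `w` from `x₀` to `g x₀`) if there are a loop `c` in `E` at `x₀` and a lift `H` of
the homotopy `(t,s) ↦ p (c t)` with `H(t,0) = c(t)`, `H(0,s) = (θ∗w)(s)`, `H(t,1) = g(c(t))`
and `H(1,s) = (θ'∗w)(s)`. -/
def ReidemeisterRelB (p : C(E, B)) (g : C(E, E)) {x₀ : E} (w : Path x₀ (g x₀)) :
    FiberLoop p x₀ → FiberLoop p x₀ → Prop := fun θ θ' =>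
  ∃ (c : Path x₀ x₀) (H : C(I × I, E)),
    (∀ t, H (t, 0) = c t) ∧
    (∀ s, H (0, s) = (θ.1.trans w) s) ∧
    (∀ t, H (t, 1) = g (c t)) ∧
    (∀ s, H (1, s) = (θ'.1.trans w) s) ∧
    (∀ t s, p (H (t, s)) = p (c t))

/-- The set of Reidemeister classes over `B`. -/
def ReidemeisterSetB (p : C(E, B)) (g : C(E, E)) {x₀ : E} (w : Path x₀ (g x₀)) : Type :=
  Quot (ReidemeisterRelB p g w)

/-- The `n`-th iterate of a continuous self-map, as a continuous map. -/
def iterC (f : C(E, E)) (n : ℕ) : C(E, E) := ⟨(⇑f)^[n], f.continuous.iterate n⟩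

/-- The path `n(ω) = ω ∗ f(ω) ∗ ⋯ ∗ f^{n−1}(ω)` from `x₀` to `f^n(x₀)`. -/
noncomputable def nPath (f : C(E, E)) {x₀ : E} (ω : Path x₀ (f x₀)) : (n : ℕ) → Path x₀ ((⇑f)^[n] x₀)
  | 0 => Path.refl x₀
  | 1 => ω
  | (n + 2) => (nPath f ω (n + 1)).trans (ω.map (f.continuous.iterate (n + 1)))

theorem fiber_iterate {p : C(E, B)} {f : C(E, E)} (hf : ∀ x, p (f x) = p x) :
    ∀ (k : ℕ) (x : E), p ((⇑f)^[k] x) = p x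
  | 0, _ => rfl
  | (k + 1), x => by
      rw [Function.iterate_succ_apply, fiber_iterate hf k (f x), hf x]

theorem fiber_trans {p : C(E, B)} {x₀ a b c : E} {γ : Path a b} {δ : Path b c}
    (hγ : ∀ t, p (γ t) = p x₀) (hδ : ∀ t, p (δ t) = p x₀) :
    ∀ t, p ((γ.trans δ) t) = p x₀ := by
  intro t
  rw [Path.trans_apply]
  split_ifs <;> first | exact hγ _ | exact hδ _

theorem fiber_symm {p : C(E, B)} {x₀ a b : E} {γ : Path a b}
    (hγ : ∀ t, p (γ t) = p x₀) : ∀ t, p (γ.symm t) = p x₀ := fun _ => hγ _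

theorem fiber_map {p : C(E, B)} {f : C(E, E)} (hf : ∀ x, p (f x) = p x) {x₀ a b : E}
    {γ : Path a b} (hγ : ∀ t, p (γ t) = p x₀) (k : ℕ) :
    ∀ t, p ((γ.map (f.continuous.iterate k)) t) = p x₀ := fun t => by
  show p ((⇑f)^[k] (γ t)) = p x₀
  rw [fiber_iterate hf k, hγ]

theorem fiber_nPath {p : C(E, B)} {f : C(E, E)} (hf : ∀ x, p (f x) = p x) {x₀ : E}
    {ω : Path x₀ (f x₀)} (hω : ∀ t, p (ω t) = p x₀) :
    ∀ (n : ℕ) (t : I), p (nPath f ω n t) = p x₀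
  | 0, _ => rfl
  | 1, t => hω t
  | (n + 2), t => by
      simp only [nPath]
      exact fiber_trans (fiber_nPath hf hω (n + 1)) (fiber_map hf hω (n + 1)) t

/-- The loop `f^{kω}(θ) = k(ω) ∗ f^k(θ) ∗ k(ω)⁻¹` at `x₀`. -/
noncomputable def fpowLoop (f : C(E, E)) {x₀ : E} (ω : Path x₀ (f x₀)) (k : ℕ) (θ : Path x₀ x₀) :
    Path x₀ x₀ :=
  ((nPath f ω k).trans (θ.map (f.continuous.iterate k))).trans (nPath f ω k).symm

/-- `f^{kω}` applied to a fiber loop is again a fiber loop. -/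
noncomputable def fpowFiberLoop (p : C(E, B)) (f : C(E, E)) (hf : ∀ x, p (f x) = p x) {x₀ : E}
    (ω : Path x₀ (f x₀)) (hω : ∀ t, p (ω t) = p x₀) (k : ℕ) (θ : FiberLoop p x₀) :
    FiberLoop p x₀ :=
  ⟨fpowLoop f ω k θ.1,
    fiber_trans (fiber_trans (fiber_nPath hf hω k) (fiber_map hf θ.2 k))
      (fiber_symm (fiber_nPath hf hω k))⟩

/-- Auxiliary product `f^{0·mω}(θ) ∗ f^{1·mω}(θ) ∗ ⋯ ∗ f^{(j−1)·mω}(θ)`. -/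
noncomputable def gammaAux (f : C(E, E)) {x₀ : E} (ω : Path x₀ (f x₀)) (m : ℕ) (θ : Path x₀ x₀) :
    ℕ → Path x₀ x₀
  | 0 => Path.refl x₀
  | (j + 1) => (gammaAux f ω m θ j).trans (fpowLoop f ω (j * m) θ)

/-- The loop `γ_{m,n}(θ) = θ ∗ f^{mω}(θ) ∗ f^{2mω}(θ) ∗ ⋯ ∗ f^{(n−m)ω}(θ)`. -/
noncomputable def gammaLoop (f : C(E, E)) {x₀ : E} (ω : Path x₀ (f x₀)) (m n : ℕ) (θ : Path x₀ x₀) :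
    Path x₀ x₀ :=
  gammaAux f ω m θ (n / m)

theorem fiber_gammaAux {p : C(E, B)} {f : C(E, E)} (hf : ∀ x, p (f x) = p x) {x₀ : E}
    {ω : Path x₀ (f x₀)} (hω : ∀ t, p (ω t) = p x₀) (m : ℕ) (θ : FiberLoop p x₀) :
    ∀ (j : ℕ) (t : I), p (gammaAux f ω m θ.1 j t) = p x₀
  | 0, _ => rfl
  | (j + 1), t => by
    simp only [gammaAux]
    exact fiber_trans (fiber_gammaAux hf hω m θ j)
      (fpowFiberLoop p f hf ω hω (j * m) θ).2 t

/-- `γ_{m,n}` applied to a fiber loop is again a fiber loop. -/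
noncomputable def gammaFiberLoop (p : C(E, B)) (f : C(E, E)) (hf : ∀ x, p (f x) = p x) {x₀ : E}
    (ω : Path x₀ (f x₀)) (hω : ∀ t, p (ω t) = p x₀) (m n : ℕ) (θ : FiberLoop p x₀) :
    FiberLoop p x₀ :=
  ⟨gammaLoop f ω m n θ.1, fiber_gammaAux hf hω m θ (n / m)⟩

/-- `F` realizes the induced function `[f^ω]` on the Reidemeister classes of `f^n` over `B`. -/
def IsFOmegaMap (p : C(E, B)) (f : C(E, E)) (hf : ∀ x, p (f x) = p x) {x₀ : E}
    (ω : Path x₀ (f x₀)) (hω : ∀ t, p (ω t) = p x₀) (n : ℕ)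
    (F : ReidemeisterSetB p (iterC f n) (nPath f ω n) →
      ReidemeisterSetB p (iterC f n) (nPath f ω n)) : Prop :=
  ∀ θ : FiberLoop p x₀,
    F (Quot.mk _ θ) = Quot.mk _ (fpowFiberLoop p f hf ω hω 1 θ)

/-- `G` realizes the induced function `[γ_{m,n}]` from the Reidemeister classes of `f^m`
to those of `f^n` over `B`. -/
def IsGammaMap (p : C(E, B)) (f : C(E, E)) (hf : ∀ x, p (f x) = p x) {x₀ : E}
    (ω : Path x₀ (f x₀)) (hω : ∀ t, p (ω t) = p x₀) (m n : ℕ)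
    (G : ReidemeisterSetB p (iterC f m) (nPath f ω m) →
      ReidemeisterSetB p (iterC f n) (nPath f ω n)) : Prop :=
  ∀ θ : FiberLoop p x₀,
    G (Quot.mk _ θ) = Quot.mk _ (gammaFiberLoop p f hf ω hω m n θ)

/-- Fixed points of a continuous self-map. -/
def FixPt (g : C(E, E)) : Type := {x : E // g x = x}

/-- Nielsen equivalence over `B` of fixed points of `g`. -/
def NielsenRelB (p : C(E, B)) (g : C(E, E)) : FixPt g → FixPt g → Prop := fun x y =>
  ∃ (lam : Path x.1 y.1) (H : C(I × I, E)),
    (∀ t, H (t, 0) = lam t) ∧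
    (∀ t, H (t, 1) = g (lam t)) ∧
    (∀ s, H (0, s) = x.1) ∧
    (∀ s, H (1, s) = y.1) ∧
    (∀ t s, p (H (t, s)) = p (lam t))

/-- The set of Nielsen classes over `B`. -/
def NielsenSetB (p : C(E, B)) (g : C(E, E)) : Type := Quot (NielsenRelB p g)

/-- The space `E_B(g) = {(x, α) : p∘α const, α(0) = x, α(1) = g(x)}` with the topology
induced from `E × C(I, E)` (compact-open topology on paths). -/
def EBSpace (p : C(E, B)) (g : C(E, E)) : Type :=
  {z : E × C(I, E) // (∀ t, p (z.2 t) = p z.1) ∧ z.2 0 = z.1 ∧ z.2 1 = g z.1}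

instance (p : C(E, B)) (g : C(E, E)) : TopologicalSpace (EBSpace p g) :=
  instTopologicalSpaceSubtype

/-- Path components of a space. -/
def Pi0 (X : Type) [TopologicalSpace X] : Type := Quot (@Joined X _)

/-- The map `g_B : Fix(g) → E_B(g)`, `x ↦ (x, constant path at x)`. -/
def gBMap (p : C(E, B)) (g : C(E, E)) (x : FixPt g) : EBSpace p g :=
  ⟨(x.1, ContinuousMap.const I x.1), fun _ => rfl, rfl, x.2.symm⟩

instance (g : C(E, E)) : TopologicalSpace (FixPt g) := instTopologicalSpaceSubtype

/-- The Reidemeister class over `B` of a fiber loop. -/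
def rClass (p : C(E, B)) (g : C(E, E)) {x₀ : E} (w : Path x₀ (g x₀)) (θ : FiberLoop p x₀) :
    ReidemeisterSetB p g w := Quot.mk _ θ

/-- The Nielsen class over `B` of a fixed point. -/
def nClass (p : C(E, B)) {g : C(E, E)} (x : FixPt g) : NielsenSetB p g := Quot.mk _ x

/-- The path component of a point. -/
def piComp {X : Type} [TopologicalSpace X] (x : X) : Pi0 X := Quot.mk _ x

/-- A Reidemeister class of `f^n` over `B` is reducible to `m` if it lies in the image of
the induced function `[γ_{m,n}]`. -/
def ReducibleTo (p : C(E, B)) (f : C(E, E)) (hf : ∀ x, p (f x) = p x) {x₀ : E}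
    (ω : Path x₀ (f x₀)) (hω : ∀ t, p (ω t) = p x₀) (n m : ℕ)
    (a : ReidemeisterSetB p (iterC f n) (nPath f ω n)) : Prop :=
  ∃ G : ReidemeisterSetB p (iterC f m) (nPath f ω m) →
      ReidemeisterSetB p (iterC f n) (nPath f ω n),
    IsGammaMap p f hf ω hω m n G ∧ a ∈ Set.range G


/-! ### Auxiliary development for the final theorem -/

open Set


noncomputable section FWUtil

variable {E B Z : Type} [TopologicalSpace E] [TopologicalSpace B] [TopologicalSpace Z]

/- ### Homotopic helper lemmas -/

theorem path_ext' {x y : Z} {γ γ' : Path x y} (h : ∀ t, γ t = γ' t) : γ = γ' := by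
  ext t; exact h t

theorem ht_assoc {x₀ x₁ x₂ x₃ : Z} (a : Path x₀ x₁) (b : Path x₁ x₂) (c : Path x₂ x₃) :
    ((a.trans b).trans c).Homotopic (a.trans (b.trans c)) := ⟨Path.Homotopy.transAssoc a b c⟩

theorem ht_reflTrans {x y : Z} (a : Path x y) : ((Path.refl x).trans a).Homotopic a :=
  ⟨Path.Homotopy.reflTrans a⟩

theorem ht_transRefl {x y : Z} (a : Path x y) : (a.trans (Path.refl y)).Homotopic a :=
  ⟨Path.Homotopy.transRefl a⟩

theorem ht_transSymm {x y : Z} (a : Path x y) : (a.trans a.symm).Homotopic (Path.refl x) :=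
  Path.Homotopic.symm ⟨Path.Homotopy.reflTransSymm a⟩

theorem ht_symmTrans {x y : Z} (a : Path x y) : (a.symm.trans a).Homotopic (Path.refl y) :=
  Path.Homotopic.symm ⟨Path.Homotopy.reflSymmTrans a⟩

theorem ht_symm₂ {x y : Z} {a b : Path x y} (h : a.Homotopic b) : a.symm.Homotopic b.symm :=
  ⟨h.some.symm₂⟩

/- ### value transfer lemmas -/

theorem val_trans {W : Type} [TopologicalSpace W] (π : Z → W) {x y z : Z} (a : Path x y) (b : Path y z)
    {x' y' z' : W} (aE : Path x' y') (bE : Path y' z')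
    (ha : ∀ s, π (a s) = aE s) (hb : ∀ s, π (b s) = bE s) :
    ∀ s, π ((a.trans b) s) = (aE.trans bE) s := by
  intro s
  rw [Path.trans_apply, Path.trans_apply]
  split_ifs <;> [exact ha _; exact hb _]

/- ### pasting of squares -/

def prI (r : ℝ) : I := projIcc 0 1 zero_le_one r

theorem prI_coe {r : ℝ} (h0 : 0 ≤ r) (h1 : r ≤ 1) : prI r = ⟨r, h0, h1⟩ :=
  projIcc_of_mem _ ⟨h0, h1⟩

@[simp] theorem prI_zero : prI 0 = 0 := projIcc_left _
@[simp] theorem prI_one : prI 1 = 1 := projIcc_right _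

/-- Horizontal (in the first coordinate) pasting of squares. -/
def tpaste (A B : C(I × I, E)) (hAB : ∀ s, A (1, s) = B (0, s)) : C(I × I, E) where
  toFun z := if (z.1 : ℝ) ≤ 1 / 2 then A (prI (2 * z.1), z.2) else B (prI (2 * z.1 - 1), z.2)
  continuous_toFun := by
    apply Continuous.if_le
    · exact A.continuous.comp ((continuous_projIcc.comp (by fun_prop)).prodMk continuous_snd)
    · exact B.continuous.comp ((continuous_projIcc.comp (by fun_prop)).prodMk continuous_snd)
    · fun_prop
    · fun_prop
    · intro z hz
      have h2 : (2 * (z.1 : ℝ)) = 1 := by rw [hz]; ring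
      have h2' : (2 * (z.1 : ℝ) - 1) = 0 := by rw [hz]; ring
      rw [h2', h2, prI_zero, prI_one]
      exact hAB z.2

theorem tpaste_left (A B : C(I × I, E)) (hAB) {t : I} (h : (t : ℝ) ≤ 1 / 2) (s : I) :
    tpaste A B hAB (t, s) = A (prI (2 * t), s) := if_pos h

theorem tpaste_right (A B : C(I × I, E)) (hAB) {t : I} (h : ¬ (t : ℝ) ≤ 1 / 2) (s : I) :
    tpaste A B hAB (t, s) = B (prI (2 * t - 1), s) := if_neg h

theorem tpaste_zero (A B : C(I × I, E)) (hAB) (s : I) :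
    tpaste A B hAB (0, s) = A (0, s) := by
  rw [tpaste_left A B hAB (by norm_num) s]
  norm_num

theorem tpaste_one (A B : C(I × I, E)) (hAB) (s : I) :
    tpaste A B hAB (1, s) = B (1, s) := by
  rw [tpaste_right A B hAB (by norm_num) s]
  norm_num

/-- fiberwise condition for a square. -/
def FibS (p : C(E, B)) (S : C(I × I, E)) : Prop := ∀ t s, p (S (t, s)) = p (S (t, 0))

/-- top-edge condition for a square. -/
def TopS (g : E → E) (S : C(I × I, E)) : Prop := ∀ t, S (t, 1) = g (S (t, 0))

theorem tpaste_fib {p : C(E, B)} {A B : C(I × I, E)} (hAB) (hA : FibS p A) (hB : FibS p B) :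
    FibS p (tpaste A B hAB) := by
  intro t s
  by_cases h : (t : ℝ) ≤ 1 / 2
  · rw [tpaste_left A B hAB h, tpaste_left A B hAB h]; exact hA _ _
  · rw [tpaste_right A B hAB h, tpaste_right A B hAB h]; exact hB _ _

theorem tpaste_top {g : E → E} {A B : C(I × I, E)} (hAB) (hA : TopS g A) (hB : TopS g B) :
    TopS g (tpaste A B hAB) := by
  intro t
  by_cases h : (t : ℝ) ≤ 1 / 2
  · rw [tpaste_left A B hAB h, tpaste_left A B hAB h]; exact hA _
  · rw [tpaste_right A B hAB h, tpaste_right A B hAB h]; exact hB _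

/-- Vertical (in the second coordinate) pasting of squares. -/
def spaste (A B : C(I × I, E)) (hAB : ∀ t, A (t, 1) = B (t, 0)) : C(I × I, E) where
  toFun z := if (z.2 : ℝ) ≤ 1 / 2 then A (z.1, prI (2 * z.2)) else B (z.1, prI (2 * z.2 - 1))
  continuous_toFun := by
    apply Continuous.if_le
    · exact A.continuous.comp (continuous_fst.prodMk (continuous_projIcc.comp (by fun_prop)))
    · exact B.continuous.comp (continuous_fst.prodMk (continuous_projIcc.comp (by fun_prop)))
    · fun_prop
    · fun_prop
    · intro z hz
      have h2 : (2 * (z.2 : ℝ)) = 1 := by rw [hz]; ring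
      have h2' : (2 * (z.2 : ℝ) - 1) = 0 := by rw [hz]; ring
      rw [h2', h2, prI_zero, prI_one]
      exact hAB z.1

theorem spaste_le (A B : C(I × I, E)) (hAB) (t : I) {s : I} (h : (s : ℝ) ≤ 1 / 2) :
    spaste A B hAB (t, s) = A (t, prI (2 * s)) := if_pos h

theorem spaste_ge (A B : C(I × I, E)) (hAB) (t : I) {s : I} (h : ¬ (s : ℝ) ≤ 1 / 2) :
    spaste A B hAB (t, s) = B (t, prI (2 * s - 1)) := if_neg h

theorem spaste_bot (A B : C(I × I, E)) (hAB) (t : I) :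
    spaste A B hAB (t, 0) = A (t, 0) := by
  rw [spaste_le A B hAB t (by norm_num)]
  norm_num

theorem spaste_top' (A B : C(I × I, E)) (hAB) (t : I) :
    spaste A B hAB (t, 1) = B (t, 1) := by
  rw [spaste_ge A B hAB t (by norm_num)]
  norm_num

theorem spaste_forall {P : E → Prop} {A B : C(I × I, E)} (hAB)
    (hA : ∀ z, P (A z)) (hB : ∀ z, P (B z)) : ∀ z, P (spaste A B hAB z) := by
  intro z
  by_cases h : (z.2 : ℝ) ≤ 1 / 2
  · rw [show z = (z.1, z.2) from rfl, spaste_le A B hAB _ h]; exact hA _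
  · rw [show z = (z.1, z.2) from rfl, spaste_ge A B hAB _ h]; exact hB _

theorem spaste_edge {A B : C(I × I, E)} (hAB) {u v z' : E} (pA : Path u v) (pB : Path v z')
    (t : I) (hA : ∀ s, A (t, s) = pA s) (hB : ∀ s, B (t, s) = pB s) (s : I) :
    spaste A B hAB (t, s) = (pA.trans pB) s := by
  rw [Path.trans_apply]
  by_cases h : (s : ℝ) ≤ 1 / 2
  · rw [spaste_le A B hAB t h, dif_pos h, hA]
    congr 1
    exact prI_coe (by have := s.2.1; linarith) (by linarith)
  · rw [spaste_ge A B hAB t h, dif_neg h, hB]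
    congr 1
    refine prI_coe (by push_neg at h; linarith) (by have := s.2.2; linarith)

end FWUtil


noncomputable section FWSq
variable {E B Z : Type} [TopologicalSpace E] [TopologicalSpace B] [TopologicalSpace Z]

/- elementary squares -/

theorem Icoe0 : ((0:I):ℝ) = 0 := rfl
theorem Icoe1 : ((1:I):ℝ) = 1 := rfl

def maxSq {x y : E} (a : Path x y) : C(I × I, E) where
  toFun z := a.extend (max z.1 z.2)
  continuous_toFun := a.continuous_extend.comp (by fun_prop)

theorem maxSq_bot {x y : E} (a : Path x y) (t : I) : maxSq a (t, 0) = a t := by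
  show a.extend (max (t:ℝ) ((0:I):ℝ)) = a t
  rw [Icoe0, max_eq_left t.2.1]; exact a.extend_extends' t

theorem maxSq_left {x y : E} (a : Path x y) (s : I) : maxSq a (0, s) = a s := by
  show a.extend (max ((0:I):ℝ) (s:ℝ)) = a s
  rw [Icoe0, max_eq_right s.2.1]; exact a.extend_extends' s

theorem maxSq_top {x y : E} (a : Path x y) (t : I) : maxSq a (t, 1) = y := by
  show a.extend (max (t:ℝ) ((1:I):ℝ)) = y
  rw [Icoe1, max_eq_right t.2.2]; exact a.extend_one

theorem maxSq_right {x y : E} (a : Path x y) (s : I) : maxSq a (1, s) = y := by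
  show a.extend (max ((1:I):ℝ) (s:ℝ)) = y
  rw [Icoe1, max_eq_left s.2.2]; exact a.extend_one

def minSq {x y : E} (a : Path x y) : C(I × I, E) where
  toFun z := a.extend (min z.1 z.2)
  continuous_toFun := a.continuous_extend.comp (by fun_prop)

theorem minSq_bot {x y : E} (a : Path x y) (t : I) : minSq a (t, 0) = x := by
  show a.extend (min (t:ℝ) ((0:I):ℝ)) = x
  rw [Icoe0, min_eq_right t.2.1]; exact a.extend_zero

theorem minSq_left {x y : E} (a : Path x y) (s : I) : minSq a (0, s) = x := by
  show a.extend (min ((0:I):ℝ) (s:ℝ)) = x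
  rw [Icoe0, min_eq_left s.2.1]; exact a.extend_zero

theorem minSq_top {x y : E} (a : Path x y) (t : I) : minSq a (t, 1) = a t := by
  show a.extend (min (t:ℝ) ((1:I):ℝ)) = a t
  rw [Icoe1, min_eq_left t.2.2]; exact a.extend_extends' t

theorem minSq_right {x y : E} (a : Path x y) (s : I) : minSq a (1, s) = a s := by
  show a.extend (min ((1:I):ℝ) (s:ℝ)) = a s
  rw [Icoe1, min_eq_right s.2.2]; exact a.extend_extends' s

def symMaxSq {x y : E} (a : Path x y) : C(I × I, E) where
  toFun z := a.extend (max z.1 (1 - z.2))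
  continuous_toFun := a.continuous_extend.comp (by fun_prop)

theorem symMaxSq_bot {x y : E} (a : Path x y) (t : I) : symMaxSq a (t, 0) = y := by
  show a.extend (max (t:ℝ) (1 - ((0:I):ℝ))) = y
  rw [Icoe0, show (1 - (0:ℝ)) = (1:ℝ) by norm_num, max_eq_right t.2.2]
  exact a.extend_one

theorem symMaxSq_top {x y : E} (a : Path x y) (t : I) : symMaxSq a (t, 1) = a t := by
  show a.extend (max (t:ℝ) (1 - ((1:I):ℝ))) = a t
  rw [Icoe1, show (1 - (1:ℝ)) = (0:ℝ) by norm_num, max_eq_left t.2.1]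
  exact a.extend_extends' t

theorem symMaxSq_left {x y : E} (a : Path x y) (s : I) : symMaxSq a (0, s) = a.symm s := by
  show a.extend (max ((0:I):ℝ) (1 - (s:ℝ))) = a.symm s
  rw [Icoe0]
  have h1 : (max (0:ℝ) (1 - (s:ℝ))) = ((σ s : I) : ℝ) := by
    rw [coe_symm_eq]
    exact max_eq_right (by have := s.2.2; norm_num; linarith)
  rw [h1]
  exact (a.extend_extends' (σ s)).trans rfl

theorem symMaxSq_right {x y : E} (a : Path x y) (s : I) : symMaxSq a (1, s) = y := by
  show a.extend (max ((1:I):ℝ) (1 - (s:ℝ))) = y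
  rw [Icoe1, max_eq_left (by have := s.2.1; norm_num; linarith)]
  exact a.extend_one

def constSq {x y : E} (a : Path x y) : C(I × I, E) where
  toFun z := a z.2
  continuous_toFun := a.continuous.comp continuous_snd

@[simp] theorem constSq_apply {x y : E} (a : Path x y) (z : I × I) : constSq a z = a z.2 := rfl

/- reversal in the first coordinate -/
def revSq (S : C(I × I, E)) : C(I × I, E) where
  toFun z := S (σ z.1, z.2)
  continuous_toFun := S.continuous.comp ((continuous_symm.comp continuous_fst).prodMk continuous_snd)

@[simp] theorem revSq_apply (S : C(I × I, E)) (z : I × I) : revSq S z = S (σ z.1, z.2) := rfl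

theorem revSq_zero (S : C(I × I, E)) (s : I) : revSq S (0, s) = S (1, s) := by simp
theorem revSq_one (S : C(I × I, E)) (s : I) : revSq S (1, s) = S (0, s) := by simp

end FWSq


noncomputable section FWMain

variable {E B : Type} [TopologicalSpace E] [TopologicalSpace B]

/-- The fiber of `p` through `x₀`, as a subspace. -/
abbrev Yt (p : C(E, B)) (x₀ : E) : Type := {x : E // p x = p x₀}

/-- Lift a fiberwise path to the fiber subspace, with prescribed endpoints. -/
def up (p : C(E, B)) (x₀ : E) {a b : E} (γ : Path a b) (h : ∀ t, p (γ t) = p x₀)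
    (ya yb : Yt p x₀) (ha : (ya : E) = a) (hb : (yb : E) = b) : Path ya yb where
  toFun t := ⟨γ t, h t⟩
  continuous_toFun := γ.continuous.subtype_mk _
  source' := Subtype.ext (by rw [ha]; exact γ.source)
  target' := Subtype.ext (by rw [hb]; exact γ.target)

@[simp] theorem up_coe (p : C(E, B)) (x₀ : E) {a b : E} (γ : Path a b) (h) (ya yb) (ha) (hb)
    (t : I) : ((up p x₀ γ h ya yb ha hb t : Yt p x₀) : E) = γ t := rfl

section Main

variable (p : C(E, B)) (f : C(E, E)) (hf : ∀ x, p (f x) = p x) (x₀ : E)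
variable (ω : Path x₀ (f x₀)) (hω : ∀ t, p (ω t) = p x₀)

/-- canonical base points in the fiber. -/
def zhat (k : ℕ) : Yt p x₀ := ⟨(⇑f)^[k] x₀, fiber_iterate hf k x₀⟩

def omh : Path (zhat p f hf x₀ 0) (zhat p f hf x₀ 1) := up p x₀ ω hω _ _ rfl rfl

def Ahat (k : ℕ) : Path (zhat p f hf x₀ 0) (zhat p f hf x₀ k) :=
  up p x₀ (nPath f ω k) (fiber_nPath hf hω k) _ _ rfl rfl

def Bhat (k : ℕ) : Path (zhat p f hf x₀ k) (zhat p f hf x₀ (k + 1)) :=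
  up p x₀ (ω.map (f.continuous.iterate k)) (fiber_map hf hω k) _ _ rfl
    (Function.iterate_succ_apply f k x₀)

def Chat (k : ℕ) : Path (zhat p f hf x₀ 1) (zhat p f hf x₀ (k + 1)) :=
  up p x₀ ((nPath f ω k).map f.continuous)
    (fun t => (hf _).trans (fiber_nPath hf hω k t)) _ _ rfl
    (Function.iterate_succ_apply' f k x₀)

def Fhat (θ : FiberLoop p x₀) : Path (zhat p f hf x₀ 1) (zhat p f hf x₀ 1) :=
  up p x₀ (θ.1.map f.continuous) (fun t => (hf _).trans (θ.2 t)) _ _ rfl rfl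

def Mhat (k : ℕ) (θ : FiberLoop p x₀) : Path (zhat p f hf x₀ k) (zhat p f hf x₀ k) :=
  up p x₀ (θ.1.map (f.continuous.iterate k))
    (fun t => (fiber_iterate hf k _).trans (θ.2 t)) _ _ rfl rfl

def That (θ : FiberLoop p x₀) : Path (zhat p f hf x₀ 0) (zhat p f hf x₀ 0) :=
  up p x₀ θ.1 θ.2 _ _ rfl rfl

def Lhat (k : ℕ) (θ : FiberLoop p x₀) : Path (zhat p f hf x₀ 0) (zhat p f hf x₀ 0) :=
  up p x₀ (fpowLoop f ω k θ.1) ((fpowFiberLoop p f hf ω hω k θ).2) _ _ rfl rfl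

theorem Lhat_decomp (k : ℕ) (θ : FiberLoop p x₀) :
    Lhat p f hf x₀ ω hω k θ =
      ((Ahat p f hf x₀ ω hω k).trans (Mhat p f hf x₀ k θ)).trans
        (Ahat p f hf x₀ ω hω k).symm := by
  apply path_ext'; intro t; apply Subtype.ext
  show fpowLoop f ω k θ.1 t = _
  unfold fpowLoop
  rw [Path.trans_apply, Path.trans_apply]
  split_ifs with h
  · rw [Path.trans_apply, Path.trans_apply]; split_ifs <;> rfl
  · rfl

theorem Ahat_succ (m : ℕ) :
    Ahat p f hf x₀ ω hω (m + 2) =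
      (Ahat p f hf x₀ ω hω (m + 1)).trans (Bhat p f hf x₀ ω hω (m + 1)) := by
  apply path_ext'; intro t; apply Subtype.ext
  show ((nPath f ω (m + 1)).trans (ω.map (f.continuous.iterate (m + 1)))) t = _
  rw [Path.trans_apply, Path.trans_apply]
  split_ifs <;> rfl

theorem keyh (k : ℕ) (hk : 1 ≤ k) :
    ((Ahat p f hf x₀ ω hω k).trans (Bhat p f hf x₀ ω hω k)).Homotopic
      ((omh p f hf x₀ ω hω).trans (Chat p f hf x₀ ω hω k)) := by
  induction k, hk using Nat.le_induction with
  | base =>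
      have e1 : Ahat p f hf x₀ ω hω 1 = omh p f hf x₀ ω hω :=
        path_ext' fun t => Subtype.ext rfl
      have e2 : Bhat p f hf x₀ ω hω 1 = Chat p f hf x₀ ω hω 1 :=
        path_ext' fun t => Subtype.ext rfl
      rw [e1, e2]
  | succ k hk IH =>
      obtain ⟨m, rfl⟩ : ∃ m, k = m + 1 := ⟨k - 1, (Nat.succ_pred_eq_of_pos hk).symm⟩
      have hC : Chat p f hf x₀ ω hω (m + 2)
          = (Chat p f hf x₀ ω hω (m + 1)).trans (Bhat p f hf x₀ ω hω (m + 2)) := by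
        apply path_ext'; intro t; apply Subtype.ext
        show f (((nPath f ω (m + 1)).trans (ω.map (f.continuous.iterate (m + 1)))) t) = _
        rw [Path.trans_apply, Path.trans_apply]
        split_ifs
        · rfl
        · exact (Function.iterate_succ_apply' f (m + 1) _).symm
      rw [Ahat_succ, hC]
      exact (Path.Homotopic.hcomp IH (Path.Homotopic.refl _)).trans (ht_assoc _ _ _)

theorem cor1 (n : ℕ) (hn : 1 ≤ n) :
    ((omh p f hf x₀ ω hω).symm.trans (Ahat p f hf x₀ ω hω n)).Homotopic
      ((Chat p f hf x₀ ω hω n).trans (Bhat p f hf x₀ ω hω n).symm) := by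
  have h := keyh p f hf x₀ ω hω n hn
  have s1 : (Ahat p f hf x₀ ω hω n).Homotopic
      ((Ahat p f hf x₀ ω hω n).trans
        ((Bhat p f hf x₀ ω hω n).trans (Bhat p f hf x₀ ω hω n).symm)) :=
    ((Path.Homotopic.hcomp (Path.Homotopic.refl _) (ht_transSymm _)).trans
      (ht_transRefl _)).symm
  have t1 := Path.Homotopic.hcomp (Path.Homotopic.refl (omh p f hf x₀ ω hω).symm) s1
  have t2 := Path.Homotopic.hcomp (Path.Homotopic.refl (omh p f hf x₀ ω hω).symm)
    (ht_assoc (Ahat p f hf x₀ ω hω n) (Bhat p f hf x₀ ω hω n)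
      (Bhat p f hf x₀ ω hω n).symm).symm
  have t3 := Path.Homotopic.hcomp (Path.Homotopic.refl (omh p f hf x₀ ω hω).symm)
    (Path.Homotopic.hcomp h (Path.Homotopic.refl (Bhat p f hf x₀ ω hω n).symm))
  have t4 := Path.Homotopic.hcomp (Path.Homotopic.refl (omh p f hf x₀ ω hω).symm)
    (ht_assoc (omh p f hf x₀ ω hω) (Chat p f hf x₀ ω hω n)
      (Bhat p f hf x₀ ω hω n).symm)
  have t5 := (ht_assoc (omh p f hf x₀ ω hω).symm (omh p f hf x₀ ω hω)
    ((Chat p f hf x₀ ω hω n).trans (Bhat p f hf x₀ ω hω n).symm)).symm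
  have t6 := Path.Homotopic.hcomp (ht_symmTrans (omh p f hf x₀ ω hω))
    (Path.Homotopic.refl ((Chat p f hf x₀ ω hω n).trans (Bhat p f hf x₀ ω hω n).symm))
  have t7 := ht_reflTrans ((Chat p f hf x₀ ω hω n).trans (Bhat p f hf x₀ ω hω n).symm)
  exact t1.trans (t2.trans (t3.trans (t4.trans (t5.trans (t6.trans t7)))))

theorem Ghom (n : ℕ) (hn : 1 ≤ n) (θ : FiberLoop p x₀) :
    (up p x₀ ((fpowLoop f ω 1 θ.1).trans (nPath f ω n))
        (fiber_trans (fpowFiberLoop p f hf ω hω 1 θ).2 (fiber_nPath hf hω n))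
        (zhat p f hf x₀ 0) (zhat p f hf x₀ n) rfl rfl).Homotopic
      ((omh p f hf x₀ ω hω).trans
        (((Fhat p f hf x₀ θ).trans (Chat p f hf x₀ ω hω n)).trans
          (Bhat p f hf x₀ ω hω n).symm)) := by
  have hd : up p x₀ ((fpowLoop f ω 1 θ.1).trans (nPath f ω n))
      (fiber_trans (fpowFiberLoop p f hf ω hω 1 θ).2 (fiber_nPath hf hω n))
      (zhat p f hf x₀ 0) (zhat p f hf x₀ n) rfl rfl
      = (((omh p f hf x₀ ω hω).trans (Fhat p f hf x₀ θ)).trans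
          (omh p f hf x₀ ω hω).symm).trans (Ahat p f hf x₀ ω hω n) := by
    apply path_ext'; intro t; apply Subtype.ext
    show ((fpowLoop f ω 1 θ.1).trans (nPath f ω n)) t = _
    rw [Path.trans_apply, Path.trans_apply]
    split_ifs with h
    · show fpowLoop f ω 1 θ.1 _ = _
      unfold fpowLoop
      rw [Path.trans_apply, Path.trans_apply]
      split_ifs
      · rw [Path.trans_apply, Path.trans_apply]; split_ifs <;> rfl
      · rfl
    · rfl
  rw [hd]
  have c1 := cor1 p f hf x₀ ω hω n hn
  have t1 := ht_assoc ((omh p f hf x₀ ω hω).trans (Fhat p f hf x₀ θ))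
    (omh p f hf x₀ ω hω).symm (Ahat p f hf x₀ ω hω n)
  have t2 := Path.Homotopic.hcomp
    (Path.Homotopic.refl ((omh p f hf x₀ ω hω).trans (Fhat p f hf x₀ θ))) c1
  have t3 := ht_assoc (omh p f hf x₀ ω hω) (Fhat p f hf x₀ θ)
    ((Chat p f hf x₀ ω hω n).trans (Bhat p f hf x₀ ω hω n).symm)
  have t4 := Path.Homotopic.hcomp (Path.Homotopic.refl (omh p f hf x₀ ω hω))
    (ht_assoc (Fhat p f hf x₀ θ) (Chat p f hf x₀ ω hω n)
      (Bhat p f hf x₀ ω hω n).symm).symm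
  exact t1.trans (t2.trans (t3.trans t4))

/-- restriction of `f` to the fiber. -/
def F1 : C(Yt p x₀, Yt p x₀) :=
  ⟨fun y => ⟨f y.1, (hf _).trans y.2⟩,
    (f.continuous.comp continuous_subtype_val).subtype_mk _⟩

theorem maphat {γ δ : Path x₀ x₀} (hγ : ∀ t, p (γ t) = p x₀) (hδ : ∀ t, p (δ t) = p x₀)
    (hγ' : ∀ t, p ((γ.map f.continuous) t) = p x₀)
    (hδ' : ∀ t, p ((δ.map f.continuous) t) = p x₀)
    (h : (up p x₀ γ hγ (zhat p f hf x₀ 0) (zhat p f hf x₀ 0) rfl rfl).Homotopic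
      (up p x₀ δ hδ (zhat p f hf x₀ 0) (zhat p f hf x₀ 0) rfl rfl)) :
    (up p x₀ (γ.map f.continuous) hγ' (zhat p f hf x₀ 1) (zhat p f hf x₀ 1) rfl rfl).Homotopic
      (up p x₀ (δ.map f.continuous) hδ' (zhat p f hf x₀ 1) (zhat p f hf x₀ 1) rfl rfl) := by
  have hm := Path.Homotopic.map h (F1 p f hf x₀)
  have e1 : (up p x₀ γ hγ (zhat p f hf x₀ 0) (zhat p f hf x₀ 0) rfl rfl).map
      (F1 p f hf x₀).continuous
      = up p x₀ (γ.map f.continuous) hγ' (zhat p f hf x₀ 1) (zhat p f hf x₀ 1) rfl rfl :=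
    path_ext' fun t => Subtype.ext rfl
  have e2 : (up p x₀ δ hδ (zhat p f hf x₀ 0) (zhat p f hf x₀ 0) rfl rfl).map
      (F1 p f hf x₀).continuous
      = up p x₀ (δ.map f.continuous) hδ' (zhat p f hf x₀ 1) (zhat p f hf x₀ 1) rfl rfl :=
    path_ext' fun t => Subtype.ext rfl
  rw [e1, e2] at hm
  exact hm

theorem iterh (θ : FiberLoop p x₀) (k : ℕ) (hk : 1 ≤ k) :
    (That p f hf x₀ ((fpowFiberLoop p f hf ω hω 1)^[k] θ)).Homotopic
      (Lhat p f hf x₀ ω hω k θ) := by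
  induction k, hk using Nat.le_induction with
  | base => exact Path.Homotopic.refl _
  | succ k hk IH =>
      have hit : (fpowFiberLoop p f hf ω hω 1)^[k + 1] θ
          = fpowFiberLoop p f hf ω hω 1 ((fpowFiberLoop p f hf ω hω 1)^[k] θ) :=
        Function.iterate_succ_apply' _ k θ
      rw [hit]
      set τ := (fpowFiberLoop p f hf ω hω 1)^[k] θ with hτ
      have hd : That p f hf x₀ (fpowFiberLoop p f hf ω hω 1 τ)
          = ((omh p f hf x₀ ω hω).trans (Fhat p f hf x₀ τ)).trans
              (omh p f hf x₀ ω hω).symm := by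
        apply path_ext'; intro t; apply Subtype.ext
        show fpowLoop f ω 1 τ.1 t = _
        unfold fpowLoop
        rw [Path.trans_apply, Path.trans_apply]
        split_ifs with h
        · rw [Path.trans_apply, Path.trans_apply]; split_ifs <;> rfl
        · rfl
      rw [hd]
      have hm : (Fhat p f hf x₀ τ).Homotopic
          (up p x₀ ((fpowLoop f ω k θ.1).map f.continuous)
            (fun t => (hf _).trans ((fpowFiberLoop p f hf ω hω k θ).2 t))
            (zhat p f hf x₀ 1) (zhat p f hf x₀ 1) rfl rfl) :=
        maphat p f hf x₀ τ.2 ((fpowFiberLoop p f hf ω hω k θ).2) _ _ IH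
      have hd2 : up p x₀ ((fpowLoop f ω k θ.1).map f.continuous)
            (fun t => (hf _).trans ((fpowFiberLoop p f hf ω hω k θ).2 t))
            (zhat p f hf x₀ 1) (zhat p f hf x₀ 1) rfl rfl
          = ((Chat p f hf x₀ ω hω k).trans (Mhat p f hf x₀ (k + 1) θ)).trans
              (Chat p f hf x₀ ω hω k).symm := by
        apply path_ext'; intro t; apply Subtype.ext
        show f (fpowLoop f ω k θ.1 t) = _
        unfold fpowLoop
        rw [Path.trans_apply, Path.trans_apply]
        split_ifs with h
        · rw [Path.trans_apply, Path.trans_apply]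
          split_ifs
          · rfl
          · exact (Function.iterate_succ_apply' f k _).symm
        · rfl
      rw [hd2] at hm
      obtain ⟨m, rfl⟩ : ∃ m, k = m + 1 := ⟨k - 1, (Nat.succ_pred_eq_of_pos hk).symm⟩
      have hkey : (Ahat p f hf x₀ ω hω (m + 2)).Homotopic
          ((omh p f hf x₀ ω hω).trans (Chat p f hf x₀ ω hω (m + 1))) := by
        rw [Ahat_succ]
        exact keyh p f hf x₀ ω hω (m + 1) hk
      rw [Lhat_decomp]
      -- abbreviations
      set a := omh p f hf x₀ ω hω
      set D := Chat p f hf x₀ ω hω (m + 1)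
      set M := Mhat p f hf x₀ (m + 2) θ
      set A := Ahat p f hf x₀ ω hω (m + 2)
      -- goal : ((a.trans (Fhat τ)).trans a.symm) ≃ (A.trans M).trans A.symm
      have u1 : ((a.trans (Fhat p f hf x₀ τ)).trans a.symm).Homotopic
          ((a.trans ((D.trans M).trans D.symm)).trans a.symm) :=
        Path.Homotopic.hcomp (Path.Homotopic.hcomp (Path.Homotopic.refl a) hm)
          (Path.Homotopic.refl a.symm)
      have u2 : ((A.trans M).trans A.symm).Homotopic
          ((((a.trans D).trans M)).trans ((a.trans D)).symm) :=
        Path.Homotopic.hcomp (Path.Homotopic.hcomp hkey (Path.Homotopic.refl M))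
          (ht_symm₂ hkey)
      have u3 : (((a.trans D).trans M)).trans ((a.trans D)).symm
          = (((a.trans D).trans M)).trans (D.symm.trans a.symm) := by
        rw [Path.trans_symm]
      have u4 : ((((a.trans D).trans M)).trans (D.symm.trans a.symm)).Homotopic
          ((a.trans (D.trans M)).trans (D.symm.trans a.symm)) :=
        Path.Homotopic.hcomp (ht_assoc a D M) (Path.Homotopic.refl _)
      have u5 := ht_assoc a (D.trans M) (D.symm.trans a.symm)
      have u6 : ((D.trans M).trans (D.symm.trans a.symm)).Homotopic
          (((D.trans M).trans D.symm).trans a.symm) :=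
        (ht_assoc (D.trans M) D.symm a.symm).symm
      have u7 := ht_assoc a ((D.trans M).trans D.symm) a.symm
      exact u1.trans (u7.trans ((Path.Homotopic.hcomp (Path.Homotopic.refl a) u6.symm).trans
        (u5.symm.trans (u4.symm.trans (u3 ▸ u2.symm)))))

end Main
end FWMain

noncomputable section FWMove

variable {E B : Type} [TopologicalSpace E] [TopologicalSpace B]

section MoveSec

variable (p : C(E, B)) (f : C(E, E)) (hf : ∀ x, p (f x) = p x) (x₀ : E)
variable (ω : Path x₀ (f x₀)) (hω : ∀ t, p (ω t) = p x₀)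

/-- A homotopy of paths in the fiber, as a square in the total space. -/
def homSq {ya yb : Yt p x₀} {a b : Path ya yb} (F : a.Homotopy b) : C(I × I, E) :=
  ContinuousMap.comp ⟨Subtype.val, continuous_subtype_val⟩ F.toHomotopy.toContinuousMap

theorem homSq_apply {ya yb : Yt p x₀} {a b : Path ya yb} (F : a.Homotopy b) (z : I × I) :
    homSq p x₀ F z = ((F z : Yt p x₀) : E) := rfl

theorem homSq_zero {ya yb : Yt p x₀} {a b : Path ya yb} (F : a.Homotopy b) (s : I) :
    homSq p x₀ F (0, s) = ((a s : Yt p x₀) : E) := by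
  rw [homSq_apply]; exact congrArg Subtype.val (F.toHomotopy.apply_zero s)

theorem homSq_one {ya yb : Yt p x₀} {a b : Path ya yb} (F : a.Homotopy b) (s : I) :
    homSq p x₀ F (1, s) = ((b s : Yt p x₀) : E) := by
  rw [homSq_apply]; exact congrArg Subtype.val (F.toHomotopy.apply_one s)

theorem homSq_bot {ya yb : Yt p x₀} {a b : Path ya yb} (F : a.Homotopy b) (t : I) :
    homSq p x₀ F (t, 0) = (ya : E) := by
  rw [homSq_apply]; exact congrArg Subtype.val (F.source t)

theorem homSq_top {ya yb : Yt p x₀} {a b : Path ya yb} (F : a.Homotopy b) (t : I) :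
    homSq p x₀ F (t, 1) = (yb : E) := by
  rw [homSq_apply]; exact congrArg Subtype.val (F.target t)

theorem homSq_fib {ya yb : Yt p x₀} {a b : Path ya yb} (F : a.Homotopy b) :
    FibS p (homSq p x₀ F) := by
  intro t s
  rw [homSq_apply, homSq_apply, (F (t, s)).2, (F (t, 0)).2]

theorem homSq_topS {ya yb : Yt p x₀} {a b : Path ya yb} (F : a.Homotopy b) (n : ℕ)
    (hyb : (yb : E) = (⇑f)^[n] (ya : E)) : TopS ((⇑f)^[n]) (homSq p x₀ F) := by
  intro t
  rw [homSq_bot, homSq_top, hyb]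

/-- The basic move: a square with fiberwise slices, top equal to `f^[n]` of the bottom,
and prescribed vertical edges, witnesses the Reidemeister relation over `B`. -/
theorem moveRel (n : ℕ) (σ1 σ2 : FiberLoop p x₀) (S : C(I × I, E))
    (hfib : FibS p S) (htop : TopS ((⇑f)^[n]) S)
    (hL : ∀ s, S (0, s) = (σ1.1.trans (nPath f ω n)) s)
    (hR : ∀ s, S (1, s) = (σ2.1.trans (nPath f ω n)) s) :
    ReidemeisterRelB p (iterC f n) (nPath f ω n) σ1 σ2 := by
  refine ⟨⟨⟨fun t => S (t, 0), S.continuous.comp (continuous_id.prodMk continuous_const)⟩,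
    ?_, ?_⟩, S, fun t => rfl, hL, fun t => htop t, hR, fun t s => hfib t s⟩
  · show S (0, 0) = x₀
    rw [hL 0]; exact (σ1.1.trans (nPath f ω n)).source
  · show S (1, 0) = x₀
    rw [hR 0]; exact (σ2.1.trans (nPath f ω n)).source

/- ### squares for the `n`-th iterate relation -/

theorem fiber_extend' {a b : E} {γ : Path a b} (hγ : ∀ t, p (γ t) = p x₀) (r : ℝ) :
    p (γ.extend r) = p x₀ := hγ _

/-- The square `K` for the basic `f^n`-relation `θ ~ n(ω) f^n(θ) n(ω)⁻¹`. -/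
def KsqE (n : ℕ) (θ : FiberLoop p x₀) : C(I × I, E) :=
  spaste (maxSq θ.1)
    (spaste (constSq (nPath f ω n)) (minSq (θ.1.map (f.continuous.iterate n)))
      (fun t => by rw [constSq_apply, minSq_bot]; exact (nPath f ω n).target))
    (fun t => by
      rw [maxSq_top, spaste_bot, constSq_apply]
      exact (nPath f ω n).source.symm)

theorem KsqE_left (n : ℕ) (θ : FiberLoop p x₀) (s : I) :
    KsqE p f x₀ ω n θ (0, s)
      = (θ.1.trans ((nPath f ω n).trans (Path.refl ((⇑f)^[n] x₀)))) s := by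
  refine spaste_edge _ θ.1 ((nPath f ω n).trans (Path.refl ((⇑f)^[n] x₀))) 0
    (maxSq_left θ.1) ?_ s
  intro s'
  refine spaste_edge _ (nPath f ω n) (Path.refl ((⇑f)^[n] x₀)) 0
    (fun s'' => constSq_apply _ _) ?_ s'
  intro s''
  rw [minSq_left]
  rfl

theorem KsqE_right (n : ℕ) (θ : FiberLoop p x₀) (s : I) :
    KsqE p f x₀ ω n θ (1, s)
      = ((Path.refl x₀).trans ((nPath f ω n).trans (θ.1.map (f.continuous.iterate n)))) s := by
  refine spaste_edge _ (Path.refl x₀) ((nPath f ω n).trans (θ.1.map (f.continuous.iterate n))) 1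
    (fun s'' => maxSq_right θ.1 s'') ?_ s
  intro s'
  exact spaste_edge _ (nPath f ω n) (θ.1.map (f.continuous.iterate n)) 1
    (fun s'' => constSq_apply _ _) (fun s'' => minSq_right _ s'') s'

include hf hω in
theorem KsqE_fib (n : ℕ) (θ : FiberLoop p x₀) : FibS p (KsqE p f x₀ ω n θ) := by
  have hval : ∀ z, p (KsqE p f x₀ ω n θ z) = p x₀ := by
    refine spaste_forall (P := fun e => p e = p x₀) _ (fun z => fiber_extend' p x₀ (γ := θ.1) θ.2 _) ?_
    refine spaste_forall (P := fun e => p e = p x₀) _ (fun z => fiber_nPath hf hω n z.2) ?_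
    exact fun z => fiber_extend' p x₀ (γ := (θ.1.map (f.continuous.iterate n))) (fun t => (fiber_iterate hf n _).trans (θ.2 t)) _
  intro t s
  rw [hval (t, s), hval (t, 0)]

theorem KsqE_top (n : ℕ) (θ : FiberLoop p x₀) : TopS ((⇑f)^[n]) (KsqE p f x₀ ω n θ) := by
  intro t
  unfold KsqE
  rw [spaste_top', spaste_top', minSq_top, spaste_bot, maxSq_bot]
  rfl

end MoveSec
end FWMove

noncomputable section FWMoveB

variable {E B : Type} [TopologicalSpace E] [TopologicalSpace B]
variable (p : C(E, B)) (f : C(E, E)) (hf : ∀ x, p (f x) = p x) (x₀ : E)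
variable (ω : Path x₀ (f x₀)) (hω : ∀ t, p (ω t) = p x₀)

theorem hbLeft (n : ℕ) (θ : FiberLoop p x₀) :
    (up p x₀ (θ.1.trans (nPath f ω n)) (fiber_trans θ.2 (fiber_nPath hf hω n))
        (zhat p f hf x₀ 0) (zhat p f hf x₀ n) rfl rfl).Homotopic
      ((That p f hf x₀ θ).trans
        ((Ahat p f hf x₀ ω hω n).trans (Path.refl (zhat p f hf x₀ n)))) := by
  have hd : up p x₀ (θ.1.trans (nPath f ω n)) (fiber_trans θ.2 (fiber_nPath hf hω n))
      (zhat p f hf x₀ 0) (zhat p f hf x₀ n) rfl rfl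
      = (That p f hf x₀ θ).trans (Ahat p f hf x₀ ω hω n) := by
    apply path_ext'; intro t; apply Subtype.ext
    show (θ.1.trans (nPath f ω n)) t = _
    rw [Path.trans_apply, Path.trans_apply]
    split_ifs <;> rfl
  rw [hd]
  exact Path.Homotopic.hcomp (Path.Homotopic.refl _)
    (ht_transRefl (Ahat p f hf x₀ ω hω n)).symm

theorem hbRight (n : ℕ) (hn : 1 ≤ n) (θ : FiberLoop p x₀) :
    (up p x₀ (((fpowFiberLoop p f hf ω hω 1)^[n] θ).1.trans (nPath f ω n))
        (fiber_trans ((fpowFiberLoop p f hf ω hω 1)^[n] θ).2 (fiber_nPath hf hω n))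
        (zhat p f hf x₀ 0) (zhat p f hf x₀ n) rfl rfl).Homotopic
      ((Path.refl (zhat p f hf x₀ 0)).trans
        ((Ahat p f hf x₀ ω hω n).trans (Mhat p f hf x₀ n θ))) := by
  have hd : up p x₀ (((fpowFiberLoop p f hf ω hω 1)^[n] θ).1.trans (nPath f ω n))
      (fiber_trans ((fpowFiberLoop p f hf ω hω 1)^[n] θ).2 (fiber_nPath hf hω n))
      (zhat p f hf x₀ 0) (zhat p f hf x₀ n) rfl rfl
      = (That p f hf x₀ ((fpowFiberLoop p f hf ω hω 1)^[n] θ)).trans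
          (Ahat p f hf x₀ ω hω n) := by
    apply path_ext'; intro t; apply Subtype.ext
    show (((fpowFiberLoop p f hf ω hω 1)^[n] θ).1.trans (nPath f ω n)) t = _
    rw [Path.trans_apply, Path.trans_apply]
    split_ifs <;> rfl
  rw [hd]
  have c1 := Path.Homotopic.hcomp (iterh p f hf x₀ ω hω θ n hn)
    (Path.Homotopic.refl (Ahat p f hf x₀ ω hω n))
  rw [Lhat_decomp p f hf x₀ ω hω n θ] at c1
  exact c1.trans ((ht_assoc _ _ _).trans
    ((Path.Homotopic.hcomp (Path.Homotopic.refl _) (ht_symmTrans _)).trans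
      ((ht_transRefl _).trans ((ht_reflTrans _).symm))))

include hf hω in
theorem moveB (n : ℕ) (hn : 1 ≤ n) (θ : FiberLoop p x₀) :
    ReidemeisterRelB p (iterC f n) (nPath f ω n) θ ((fpowFiberLoop p f hf ω hω 1)^[n] θ) := by
  have h0 := hbLeft p f hf x₀ ω hω n θ
  have h1 := (hbRight p f hf x₀ ω hω n hn θ).symm
  let F0 := h0.some
  let F1 := h1.some
  have e1 : ∀ s, (((That p f hf x₀ θ).trans
      ((Ahat p f hf x₀ ω hω n).trans (Path.refl (zhat p f hf x₀ n)))) s : E)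
      = (θ.1.trans ((nPath f ω n).trans (Path.refl ((⇑f)^[n] x₀)))) s :=
    val_trans Subtype.val _ _ θ.1 ((nPath f ω n).trans (Path.refl ((⇑f)^[n] x₀)))
      (fun _ => rfl)
      (val_trans Subtype.val _ _ (nPath f ω n) (Path.refl ((⇑f)^[n] x₀))
        (fun _ => rfl) (fun _ => rfl))
  have e2 : ∀ s, (((Path.refl (zhat p f hf x₀ 0)).trans
      ((Ahat p f hf x₀ ω hω n).trans (Mhat p f hf x₀ n θ))) s : E)
      = ((Path.refl x₀).trans
          ((nPath f ω n).trans (θ.1.map (f.continuous.iterate n)))) s :=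
    val_trans Subtype.val _ _ (Path.refl x₀)
      ((nPath f ω n).trans (θ.1.map (f.continuous.iterate n)))
      (fun _ => rfl)
      (val_trans Subtype.val _ _ (nPath f ω n) (θ.1.map (f.continuous.iterate n))
        (fun _ => rfl) (fun _ => rfl))
  have m1 : ∀ s, homSq p x₀ F0 (1, s) = KsqE p f x₀ ω n θ (0, s) := by
    intro s
    rw [homSq_one, KsqE_left]
    exact e1 s
  have m2 : ∀ s, KsqE p f x₀ ω n θ (1, s) = homSq p x₀ F1 (0, s) := by
    intro s
    rw [KsqE_right, homSq_zero]
    exact (e2 s).symm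
  have m1' : ∀ s, homSq p x₀ F0 (1, s)
      = (tpaste (KsqE p f x₀ ω n θ) (homSq p x₀ F1) m2) (0, s) := by
    intro s
    rw [tpaste_zero]
    exact m1 s
  refine moveRel p f x₀ ω n θ ((fpowFiberLoop p f hf ω hω 1)^[n] θ)
    (tpaste (homSq p x₀ F0) (tpaste (KsqE p f x₀ ω n θ) (homSq p x₀ F1) m2) m1')
    ?_ ?_ ?_ ?_
  · exact tpaste_fib m1' (homSq_fib p x₀ F0)
      (tpaste_fib m2 (KsqE_fib p f hf x₀ ω hω n θ) (homSq_fib p x₀ F1))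
  · exact tpaste_top m1' (homSq_topS p f x₀ F0 n rfl)
      (tpaste_top m2 (KsqE_top p f x₀ ω n θ) (homSq_topS p f x₀ F1 n rfl))
  · intro s
    rw [tpaste_zero, homSq_zero]
    rfl
  · intro s
    rw [tpaste_one, tpaste_one, homSq_one]
    rfl

end FWMoveB

noncomputable section FWMoveA

variable {E B : Type} [TopologicalSpace E] [TopologicalSpace B]
variable (p : C(E, B)) (f : C(E, E)) (hf : ∀ x, p (f x) = p x) (x₀ : E)
variable (ω : Path x₀ (f x₀)) (hω : ∀ t, p (ω t) = p x₀)

def nuE (n : ℕ) (θ : FiberLoop p x₀) : Path (f x₀) (f ((⇑f)^[n] x₀)) :=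
  (θ.1.map f.continuous).trans ((nPath f ω n).map f.continuous)

def BnE (n : ℕ) : Path ((⇑f)^[n] x₀) ((⇑f)^[n] (f x₀)) := ω.map (f.continuous.iterate n)

def BnES (n : ℕ) : Path (f ((⇑f)^[n] x₀)) ((⇑f)^[n] x₀) :=
  ((BnE f x₀ ω n).symm).cast
    ((Function.iterate_succ_apply' f n x₀).symm.trans (Function.iterate_succ_apply f n x₀)) rfl

def RsqE (n : ℕ) (θ : FiberLoop p x₀) : C(I × I, E) :=
  spaste (maxSq ω)
    (spaste (constSq (nuE p f x₀ ω n θ)) (symMaxSq (BnE f x₀ ω n))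
      (fun _ => by
        rw [constSq_apply, symMaxSq_bot]
        exact ((nuE p f x₀ ω n θ).target).trans
          ((Function.iterate_succ_apply' f n x₀).symm.trans (Function.iterate_succ_apply f n x₀))))
    (fun t => by
      rw [maxSq_top, spaste_bot, constSq_apply]
      exact (nuE p f x₀ ω n θ).source.symm)

theorem RsqE_left (n : ℕ) (θ : FiberLoop p x₀) (s : I) :
    RsqE p f x₀ ω n θ (0, s)
      = (ω.trans ((nuE p f x₀ ω n θ).trans (BnES f x₀ ω n))) s := by
  refine spaste_edge _ ω ((nuE p f x₀ ω n θ).trans (BnES f x₀ ω n)) 0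
    (maxSq_left ω) ?_ s
  intro s'
  exact spaste_edge _ (nuE p f x₀ ω n θ) (BnES f x₀ ω n) 0
    (fun _ => constSq_apply _ _) (fun s'' => symMaxSq_left (BnE f x₀ ω n) s'') s'

theorem RsqE_right (n : ℕ) (θ : FiberLoop p x₀) (s : I) :
    RsqE p f x₀ ω n θ (1, s)
      = ((Path.refl (f x₀)).trans
          ((nuE p f x₀ ω n θ).trans (Path.refl (f ((⇑f)^[n] x₀))))) s := by
  refine spaste_edge _ (Path.refl (f x₀))
    ((nuE p f x₀ ω n θ).trans (Path.refl (f ((⇑f)^[n] x₀)))) 1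
    (fun s'' => maxSq_right ω s'') ?_ s
  intro s'
  refine spaste_edge _ (nuE p f x₀ ω n θ) (Path.refl (f ((⇑f)^[n] x₀))) 1
    (fun _ => constSq_apply _ _) ?_ s'
  intro s''
  rw [symMaxSq_right]
  exact (Function.iterate_succ_apply f n x₀).symm.trans (Function.iterate_succ_apply' f n x₀)

include hf hω in
theorem RsqE_fib (n : ℕ) (θ : FiberLoop p x₀) : FibS p (RsqE p f x₀ ω n θ) := by
  have hval : ∀ z, p (RsqE p f x₀ ω n θ z) = p x₀ := by
    refine spaste_forall (P := fun e => p e = p x₀) _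
      (fun z => fiber_extend' p x₀ (γ := ω) hω _) ?_
    refine spaste_forall (P := fun e => p e = p x₀) _ ?_
      (fun z => fiber_extend' p x₀ (γ := BnE f x₀ ω n) (fiber_map hf hω n) _)
    intro z
    exact fiber_trans (γ := θ.1.map f.continuous) (δ := (nPath f ω n).map f.continuous)
      (fun t => (hf _).trans (θ.2 t)) (fun t => (hf _).trans (fiber_nPath hf hω n t)) z.2
  intro t s
  rw [hval (t, s), hval (t, 0)]

theorem RsqE_top (n : ℕ) (θ : FiberLoop p x₀) : TopS ((⇑f)^[n]) (RsqE p f x₀ ω n θ) := by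
  intro t
  unfold RsqE
  rw [spaste_top', spaste_top', symMaxSq_top, spaste_bot, maxSq_bot]
  rfl

theorem hc1h (n : ℕ) (θ : FiberLoop p x₀) :
    ((Path.refl (zhat p f hf x₀ 1)).trans
        (((Fhat p f hf x₀ θ).trans (Chat p f hf x₀ ω hω n)).trans
          (Path.refl (zhat p f hf x₀ (n + 1))))).Homotopic
      ((Fhat p f hf x₀ θ).trans (Chat p f hf x₀ ω hω n)) :=
  (ht_reflTrans _).trans (ht_transRefl _)

include hf hω in
theorem moveA (n : ℕ) (hn : 1 ≤ n) (θ θ' : FiberLoop p x₀)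
    (hrel : ReidemeisterRelB p (iterC f n) (nPath f ω n) θ θ') :
    ReidemeisterRelB p (iterC f n) (nPath f ω n)
      (fpowFiberLoop p f hf ω hω 1 θ) (fpowFiberLoop p f hf ω hω 1 θ') := by
  obtain ⟨c, H, hc0, hL0, hcc1, hR1, hfb⟩ := hrel
  -- pointwise value identifications
  have eL : ∀ (τ : FiberLoop p x₀) (s : I),
      ((((omh p f hf x₀ ω hω).trans
        (((Fhat p f hf x₀ τ).trans (Chat p f hf x₀ ω hω n)).trans
          (Bhat p f hf x₀ ω hω n).symm)) s : Yt p x₀) : E)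
      = (ω.trans ((nuE p f x₀ ω n τ).trans (BnES f x₀ ω n))) s := by
    intro τ
    refine val_trans Subtype.val _ _ ω ((nuE p f x₀ ω n τ).trans (BnES f x₀ ω n))
      (fun _ => rfl) ?_
    refine val_trans Subtype.val _ _ (nuE p f x₀ ω n τ) (BnES f x₀ ω n) ?_ (fun _ => rfl)
    exact val_trans Subtype.val _ _ (τ.1.map f.continuous)
      ((nPath f ω n).map f.continuous) (fun _ => rfl) (fun _ => rfl)
  have eR : ∀ (τ : FiberLoop p x₀) (s : I),
      ((((Path.refl (zhat p f hf x₀ 1)).trans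
        (((Fhat p f hf x₀ τ).trans (Chat p f hf x₀ ω hω n)).trans
          (Path.refl (zhat p f hf x₀ (n + 1))))) s : Yt p x₀) : E)
      = ((Path.refl (f x₀)).trans
          ((nuE p f x₀ ω n τ).trans (Path.refl (f ((⇑f)^[n] x₀))))) s := by
    intro τ
    refine val_trans Subtype.val _ _ (Path.refl (f x₀))
      ((nuE p f x₀ ω n τ).trans (Path.refl (f ((⇑f)^[n] x₀)))) (fun _ => rfl) ?_
    refine val_trans Subtype.val _ _ (nuE p f x₀ ω n τ) (Path.refl (f ((⇑f)^[n] x₀))) ?_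
      (fun _ => Function.iterate_succ_apply' f n x₀)
    exact val_trans Subtype.val _ _ (τ.1.map f.continuous)
      ((nPath f ω n).map f.continuous) (fun _ => rfl) (fun _ => rfl)
  have eM : ∀ (τ : FiberLoop p x₀) (s : I),
      ((((Fhat p f hf x₀ τ).trans (Chat p f hf x₀ ω hω n)) s : Yt p x₀) : E)
      = f ((τ.1.trans (nPath f ω n)) s) := by
    intro τ s
    have h1 := val_trans Subtype.val (Fhat p f hf x₀ τ) (Chat p f hf x₀ ω hω n)
      (τ.1.map f.continuous) ((nPath f ω n).map f.continuous) (fun _ => rfl) (fun _ => rfl) s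
    rw [h1, ← Path.map_trans]
    rfl
  -- homotopies between the seam paths
  have g0 := Ghom p f hf x₀ ω hω n hn θ
  have g1 := (Ghom p f hf x₀ ω hω n hn θ').symm
  have hC1 := hc1h p f hf x₀ ω hω n θ
  have hC2 := (hc1h p f hf x₀ ω hω n θ').symm
  let F0 := g0.some
  let F2 := hC1.some
  let F3 := hC2.some
  let F4 := g1.some
  let S2 := RsqE p f x₀ ω n θ
  let S4 := f.comp H
  let S6 := revSq (RsqE p f x₀ ω n θ')
  -- seams, from the right
  have m6 : ∀ s, S6 (1, s) = homSq p x₀ F4 (0, s) := by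
    intro s
    rw [show S6 (1, s) = RsqE p f x₀ ω n θ' (0, s) from revSq_one _ s, RsqE_left, homSq_zero]
    exact (eL θ' s).symm
  let T6 := tpaste S6 (homSq p x₀ F4) m6
  have m5 : ∀ s, homSq p x₀ F3 (1, s) = T6 (0, s) := by
    intro s
    rw [homSq_one, show T6 (0, s) = S6 (0, s) from tpaste_zero _ _ _ s,
      show S6 (0, s) = RsqE p f x₀ ω n θ' (1, s) from revSq_zero _ s, RsqE_right]
    exact eR θ' s
  let T5 := tpaste (homSq p x₀ F3) T6 m5
  have m4 : ∀ s, S4 (1, s) = T5 (0, s) := by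
    intro s
    rw [show T5 (0, s) = homSq p x₀ F3 (0, s) from tpaste_zero _ _ _ s, homSq_zero]
    show f (H (1, s)) = _
    rw [hR1 s]
    exact (eM θ' s).symm
  let T4 := tpaste S4 T5 m4
  have m3 : ∀ s, homSq p x₀ F2 (1, s) = T4 (0, s) := by
    intro s
    rw [homSq_one, show T4 (0, s) = S4 (0, s) from tpaste_zero _ _ _ s]
    show _ = f (H (0, s))
    rw [hL0 s]
    exact eM θ s
  let T3 := tpaste (homSq p x₀ F2) T4 m3
  have m2 : ∀ s, S2 (1, s) = T3 (0, s) := by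
    intro s
    rw [show S2 (1, s) = _ from RsqE_right p f x₀ ω n θ s,
      show T3 (0, s) = homSq p x₀ F2 (0, s) from tpaste_zero _ _ _ s, homSq_zero]
    exact (eR θ s).symm
  let T2 := tpaste S2 T3 m2
  have m1 : ∀ s, homSq p x₀ F0 (1, s) = T2 (0, s) := by
    intro s
    rw [homSq_one, show T2 (0, s) = S2 (0, s) from tpaste_zero _ _ _ s,
      show S2 (0, s) = _ from RsqE_left p f x₀ ω n θ s]
    exact eL θ s
  -- auxiliary facts for the middle square
  have S4fib : FibS p S4 := by
    intro t s
    show p (f (H (t, s))) = p (f (H (t, 0)))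
    rw [hf, hf, hfb t s, hfb t 0]
  have S4top : TopS ((⇑f)^[n]) S4 := by
    intro t
    show f (H (t, 1)) = (⇑f)^[n] (f (H (t, 0)))
    rw [hcc1 t, hc0 t]
    exact (Function.iterate_succ_apply' f n (c t)).symm.trans
      (Function.iterate_succ_apply f n (c t))
  have S6fib : FibS p S6 := by
    intro t s
    exact RsqE_fib p f hf x₀ ω hω n θ' (σ t) s
  have S6top : TopS ((⇑f)^[n]) S6 := by
    intro t
    exact RsqE_top p f x₀ ω n θ' (σ t)
  refine moveRel p f x₀ ω n (fpowFiberLoop p f hf ω hω 1 θ) (fpowFiberLoop p f hf ω hω 1 θ')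
    (tpaste (homSq p x₀ F0) T2 m1) ?_ ?_ ?_ ?_
  · exact tpaste_fib m1 (homSq_fib p x₀ F0)
      (tpaste_fib m2 (RsqE_fib p f hf x₀ ω hω n θ)
        (tpaste_fib m3 (homSq_fib p x₀ F2)
          (tpaste_fib m4 S4fib
            (tpaste_fib m5 (homSq_fib p x₀ F3)
              (tpaste_fib m6 S6fib (homSq_fib p x₀ F4))))))
  · exact tpaste_top m1 (homSq_topS p f x₀ F0 n rfl)
      (tpaste_top m2 (RsqE_top p f x₀ ω n θ)
        (tpaste_top m3 (homSq_topS p f x₀ F2 n (Function.iterate_succ_apply f n x₀))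
          (tpaste_top m4 S4top
            (tpaste_top m5 (homSq_topS p f x₀ F3 n (Function.iterate_succ_apply f n x₀))
              (tpaste_top m6 S6top (homSq_topS p f x₀ F4 n rfl))))))
  · intro s
    rw [tpaste_zero, homSq_zero]
    rfl
  · intro s
    rw [tpaste_one, tpaste_one, tpaste_one, tpaste_one, tpaste_one, tpaste_one, homSq_one]
    rfl

end FWMoveA


theorem fOmega_induced_on_reidemeister {E B : Type} [TopologicalSpace E] [TopologicalSpace B]
    [CompactSpace E] [CompactSpace B] [PathConnectedSpace E] [PathConnectedSpace B]
    [T2Space E] [T2Space B] {dE dB : ℕ}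
    [ChartedSpace (EuclideanSpace ℝ (Fin dE)) E]
    [ChartedSpace (EuclideanSpace ℝ (Fin dB)) B]
    (p : C(E, B)) (hp : IsHurewiczFibration p)
    (f : C(E, E)) (hf : ∀ x, p (f x) = p x)
    (x₀ : E) (ω : Path x₀ (f x₀)) (hω : ∀ t, p (ω t) = p x₀)
    (n : ℕ) (hn : 0 < n) :
    ∃ F : ReidemeisterSetB p (iterC f n) (nPath f ω n) →
        ReidemeisterSetB p (iterC f n) (nPath f ω n),
      (∀ θ : FiberLoop p x₀,
        F (rClass p (iterC f n) (nPath f ω n) θ)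
          = rClass p (iterC f n) (nPath f ω n) (fpowFiberLoop p f hf ω hω 1 θ)) ∧
      F^[n] = id := by
  classical
  have wd : ∀ θ θ' : FiberLoop p x₀, ReidemeisterRelB p (iterC f n) (nPath f ω n) θ θ' →
      (Quot.mk (ReidemeisterRelB p (iterC f n) (nPath f ω n)) (fpowFiberLoop p f hf ω hω 1 θ)
        : ReidemeisterSetB p (iterC f n) (nPath f ω n))
      = Quot.mk _ (fpowFiberLoop p f hf ω hω 1 θ') :=
    fun θ θ' h => Quot.sound (moveA p f hf x₀ ω hω n hn θ θ' h)
  refine ⟨Quot.lift (fun θ => Quot.mk _ (fpowFiberLoop p f hf ω hω 1 θ)) wd,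
    fun θ => rfl, ?_⟩
  funext a
  induction a using Quot.ind with
  | _ θ =>
  have hiter : ∀ (k : ℕ) (τ : FiberLoop p x₀),
      (Quot.lift (fun θ => Quot.mk (ReidemeisterRelB p (iterC f n) (nPath f ω n))
        (fpowFiberLoop p f hf ω hω 1 θ)) wd)^[k] (Quot.mk _ τ)
      = Quot.mk _ ((fpowFiberLoop p f hf ω hω 1)^[k] τ) := by
    intro k
    induction k with
    | zero => intro τ; rfl
    | succ k ih =>
        intro τ
        rw [Function.iterate_succ_apply, Function.iterate_succ_apply]
        exact ih (fpowFiberLoop p f hf ω hω 1 τ)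
  show _ = Quot.mk _ θ
  exact (hiter n θ).trans (Quot.sound (moveB p f hf x₀ ω hω n hn θ)).symm
end

section
/- For m | n, the function γ_{m,n}: π₁(Y, x₀) → π₁(Y, x₀), γ_{m,n}(θ) = θ ∗ f^{mω}(θ) ∗ f^{2mω}(θ) ∗ ⋯ ∗ f^{(n−m)ω}(θ), induces a well-defined function [γ_{m,n}]: R_B(f^m; x₀, m(ω)) → R_B(f^n; x₀, n(ω)). Moreover, if k | m | n then [γ_{m,n}] ∘ [γ_{k,m}] = [γ_{k,n}]. -/
open unitInterval

variable {E B : Type} [TopologicalSpace E] [TopologicalSpace B]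

open CategoryTheory

attribute [local instance] Path.Homotopic.setoid

namespace RB

variable {X X' : Type} [TopologicalSpace X] [TopologicalSpace X']

/-- Pointwise congruence for `Path.trans` through a function. -/
theorem trans_pt (F : X → X') {a b c : X} {a' b' c' : X'}
    (γ : Path a b) (δ : Path b c) (γ' : Path a' b') (δ' : Path b' c')
    (hγ : ∀ t, F (γ t) = γ' t) (hδ : ∀ t, F (δ t) = δ' t) :
    ∀ t, F ((γ.trans δ) t) = (γ'.trans δ') t := by
  intro t
  rw [Path.trans_apply, Path.trans_apply]
  split_ifs
  · exact hγ _
  · exact hδ _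

theorem path_ext {a b : X} {γ δ : Path a b} (h : ∀ t, γ t = δ t) : γ = δ := by
  ext t; exact h t

/-- Class of a path as a morphism in the fundamental groupoid. -/
noncomputable def cls {u v : X} (γ : Path u v) : (⟨u⟩ : FundamentalGroupoid X) ⟶ ⟨v⟩ := ⟦γ⟧

theorem cls_trans {u v w : X} (γ : Path u v) (δ : Path v w) :
    cls (γ.trans δ) = cls γ ≫ cls δ :=
  rfl

theorem cls_refl (u : X) : cls (Path.refl u) = 𝟙 (⟨u⟩ : FundamentalGroupoid X) := rfl

theorem cls_symm {u v : X} (γ : Path u v) : cls γ.symm = Groupoid.inv (cls γ) := rfl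

theorem cls_sound {u v : X} {γ δ : Path u v} (h : γ.Homotopic δ) : cls γ = cls δ :=
  Quotient.sound h

theorem cls_exact {u v : X} {γ δ : Path u v} (h : cls γ = cls δ) : γ.Homotopic δ :=
  Quotient.exact h

/-- `eqToHom` for points. -/
noncomputable def eps {u v : X} (h : u = v) : (⟨u⟩ : FundamentalGroupoid X) ⟶ ⟨v⟩ :=
  eqToHom (congrArg _ h)

@[simp] theorem eps_self {u : X} (h : u = u) : eps h = 𝟙 _ := rfl

@[simp] theorem eps_eps {u v w : X} (h : u = v) (h' : v = w) :
    eps h ≫ eps h' = eps (h.trans h') := by subst h h'; simp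

@[simp] theorem eps_cancel {u v : X} (h : u = v) (h' : v = u) :
    eps h ≫ eps h' = 𝟙 _ := by subst h; simp

theorem cls_cast1 {u v v' : X} (γ : Path u v) (δ : Path u v') (hv : v' = v)
    (hpt : ∀ t, γ t = δ t) : cls γ = cls δ ≫ eps hv := by
  subst hv
  simp only [eps_self, Category.comp_id]
  exact congrArg cls (path_ext hpt)

theorem cls_cast2 {u u' v : X} (γ : Path u v) (δ : Path u' v) (hu : u = u')
    (hpt : ∀ t, γ t = δ t) : cls γ = eps hu ≫ cls δ := by
  subst hu
  simp only [eps_self, Category.id_comp]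
  exact congrArg cls (path_ext hpt)

theorem cls_cast3 {u u' v v' : X} (γ : Path u v) (δ : Path u' v') (hu : u = u') (hv : v' = v)
    (hpt : ∀ t, γ t = δ t) : cls γ = eps hu ≫ cls δ ≫ eps hv := by
  subst hu; subst hv
  simp only [eps_self, Category.id_comp, Category.comp_id]
  exact congrArg cls (path_ext hpt)

/-- Mapping morphisms by a continuous map. -/
noncomputable def mcl (g : C(X, X)) {u v : X} (q : (⟨u⟩ : FundamentalGroupoid X) ⟶ ⟨v⟩) :
    (⟨g u⟩ : FundamentalGroupoid X) ⟶ ⟨g v⟩ :=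
  Path.Homotopic.Quotient.map q g

theorem mcl_cls (g : C(X, X)) {u v : X} (γ : Path u v) :
    mcl g (cls γ) = cls (γ.map g.continuous) :=
  rfl

theorem mcl_comp (g : C(X, X)) {u v w : X}
    (q : (⟨u⟩ : FundamentalGroupoid X) ⟶ ⟨v⟩) (r : (⟨v⟩ : FundamentalGroupoid X) ⟶ ⟨w⟩) :
    mcl g (q ≫ r) = mcl g q ≫ mcl g r := by
  refine Quotient.inductionOn₂ q r fun a b => ?_
  show mcl g (cls (a.trans b))  = mcl g (cls a) ≫ mcl g (cls b)
  rw [mcl_cls, mcl_cls, mcl_cls, ← cls_trans, Path.map_trans]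

theorem inv_of_comp_eq_id {u v : X} (q : (⟨u⟩ : FundamentalGroupoid X) ⟶ ⟨v⟩)
    (r : (⟨v⟩ : FundamentalGroupoid X) ⟶ ⟨u⟩) (h : q ≫ r = 𝟙 _) :
    Groupoid.inv q = r := by
  have := congrArg (fun z => Groupoid.inv q ≫ z) h
  simpa [← Category.assoc] using this.symm

theorem inv_comp_rev {u v w : X} (q : (⟨u⟩ : FundamentalGroupoid X) ⟶ ⟨v⟩)
    (r : (⟨v⟩ : FundamentalGroupoid X) ⟶ ⟨w⟩) :
    Groupoid.inv (q ≫ r) = Groupoid.inv r ≫ Groupoid.inv q := by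
  apply inv_of_comp_eq_id
  simp

end RB
namespace RB
section FiberAlgebra

variable {E B : Type} [TopologicalSpace E] [TopologicalSpace B]

/-- Lift a path lying in the fiber over `p x₀` to the fiber subtype, with
prescribed endpoints. -/
def liftP (p : C(E, B)) (x₀ : E) {a b : E} (γ : Path a b) (h : ∀ t, p (γ t) = p x₀)
    (u v : {x : E // p x = p x₀}) (hu : a = u.1) (hv : b = v.1) : Path u v where
  toFun t := ⟨γ t, h t⟩
  continuous_toFun := γ.continuous.subtype_mk _
  source' := Subtype.ext (γ.source.trans hu)
  target' := Subtype.ext (γ.target.trans hv)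

@[simp] theorem liftP_apply (p : C(E, B)) (x₀ : E) {a b : E} (γ : Path a b)
    (h : ∀ t, p (γ t) = p x₀) (u v : {x : E // p x = p x₀}) (hu : a = u.1) (hv : b = v.1)
    (t : I) : (liftP p x₀ γ h u v hu hv t : E) = γ t := rfl

theorem liftP_trans (p : C(E, B)) (x₀ : E) {a b c : E} (γ : Path a b) (δ : Path b c)
    (hγ : ∀ t, p (γ t) = p x₀) (hδ : ∀ t, p (δ t) = p x₀) (hγδ : ∀ t, p ((γ.trans δ) t) = p x₀)
    (u v w : {x : E // p x = p x₀}) (hu : a = u.1) (hv : b = v.1) (hw : c = w.1) :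
    liftP p x₀ (γ.trans δ) hγδ u w hu hw =
      (liftP p x₀ γ hγ u v hu hv).trans (liftP p x₀ δ hδ v w hv hw) := by
  apply path_ext
  intro t
  apply Subtype.ext
  exact (trans_pt Subtype.val _ _ γ δ (fun _ => rfl) (fun _ => rfl) t).symm

variable (p : C(E, B)) (f : C(E, E)) (x₀ : E) (hf : ∀ x, p (f x) = p x)
  (ω : Path x₀ (f x₀)) (hω : ∀ t, p (ω t) = p x₀)

/-- Canonical points `f^[a] x₀` of the fiber. -/
def ypt (a : ℕ) : {x : E // p x = p x₀} := ⟨(⇑f)^[a] x₀, fiber_iterate hf a x₀⟩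

/-- Restriction of `f^[k]` to the fiber. -/
def phic (k : ℕ) : C({x : E // p x = p x₀}, {x : E // p x = p x₀}) where
  toFun y := ⟨(⇑f)^[k] y.1, (fiber_iterate hf k y.1).trans y.2⟩
  continuous_toFun := Continuous.subtype_mk
    ((f.continuous.iterate k).comp continuous_subtype_val)
    fun y => (fiber_iterate hf k y.1).trans y.2

/-- The lifted loop class of a fiber loop. -/
noncomputable def Tcl (α : Path x₀ x₀) (hα : ∀ t, p (α t) = p x₀) :
    (⟨ypt p f x₀ hf 0⟩ : FundamentalGroupoid {x : E // p x = p x₀}) ⟶ ⟨ypt p f x₀ hf 0⟩ :=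
  cls (liftP p x₀ α hα (ypt p f x₀ hf 0) (ypt p f x₀ hf 0) rfl rfl)

/-- Lifted `nPath`. -/
noncomputable def WY (a : ℕ) : Path (ypt p f x₀ hf 0) (ypt p f x₀ hf a) :=
  liftP p x₀ (nPath f ω a) (fiber_nPath hf hω a) _ _ rfl rfl

noncomputable def Wcl (a : ℕ) := cls (WY p f x₀ hf ω hω a)

noncomputable def Vcl (a : ℕ) := cls (WY p f x₀ hf ω hω a).symm

/-- Lifted `ω`-step `f^[a] ∘ ω`. -/
noncomputable def omS (a : ℕ) : Path (ypt p f x₀ hf a) (ypt p f x₀ hf (a + 1)) :=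
  liftP p x₀ (ω.map (f.continuous.iterate a)) (fiber_map hf hω a) _ _ rfl
    (Function.iterate_succ_apply f a x₀).symm

/-- Lifted `f^[a] ∘ nPath b`. -/
noncomputable def WpY (a b : ℕ) : Path (ypt p f x₀ hf a) (ypt p f x₀ hf (a + b)) :=
  liftP p x₀ ((nPath f ω b).map (f.continuous.iterate a))
    (fiber_map hf (fiber_nPath hf hω b) a) _ _ rfl (Function.iterate_add_apply f a b x₀).symm

/-- Lifted `f^[k] ∘ α` for a fiber loop `α`. -/
noncomputable def thMap (k : ℕ) (α : Path x₀ x₀) (hα : ∀ t, p (α t) = p x₀) :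
    Path (ypt p f x₀ hf k) (ypt p f x₀ hf k) :=
  liftP p x₀ (α.map (f.continuous.iterate k)) (fiber_map hf hα k) _ _ rfl rfl

theorem Wcl_zero : Wcl p f x₀ hf ω hω 0 = 𝟙 _ := by
  rw [Wcl, show WY p f x₀ hf ω hω 0 = Path.refl (ypt p f x₀ hf 0) from
    path_ext fun t => Subtype.ext rfl, cls_refl]

theorem wsucc (a : ℕ) : Wcl p f x₀ hf ω hω (a + 1) =
    Wcl p f x₀ hf ω hω a ≫ cls (omS p f x₀ hf ω hω a) := by
  cases a with
  | zero =>
      rw [Wcl_zero, Category.id_comp]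
      exact congrArg cls (path_ext fun t => Subtype.ext rfl)
  | succ a =>
      rw [Wcl, show WY p f x₀ hf ω hω (a + 2) =
        (WY p f x₀ hf ω hω (a + 1)).trans (omS p f x₀ hf ω hω (a + 1)) from
          path_ext fun t => Subtype.ext
            ((trans_pt Subtype.val _ _ (nPath f ω (a + 1))
              (ω.map (f.continuous.iterate (a + 1))) (fun _ => rfl) (fun _ => rfl) t).symm),
        cls_trans]
      rfl

theorem wp_zero (a : ℕ) : cls (WpY p f x₀ hf ω hω a 0) = 𝟙 _ := by
  rw [show WpY p f x₀ hf ω hω a 0 = Path.refl (ypt p f x₀ hf a) from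
    path_ext fun t => Subtype.ext rfl, cls_refl]

theorem wp_one (a : ℕ) : cls (WpY p f x₀ hf ω hω a 1) = cls (omS p f x₀ hf ω hω a) :=
  congrArg cls (path_ext fun t => Subtype.ext rfl)

theorem wp_succ (a b : ℕ) : cls (WpY p f x₀ hf ω hω a (b + 1)) =
    cls (WpY p f x₀ hf ω hω a b) ≫ cls (omS p f x₀ hf ω hω (a + b)) := by
  cases b with
  | zero => rw [wp_one, wp_zero, Category.id_comp]; rfl
  | succ b =>
      rw [show WpY p f x₀ hf ω hω a (b + 2) =
        (WpY p f x₀ hf ω hω a (b + 1)).trans (omS p f x₀ hf ω hω (a + (b + 1))) from ?_,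
        cls_trans]
      apply path_ext
      intro t
      apply Subtype.ext
      show (⇑f)^[a] (((nPath f ω (b + 1)).trans (ω.map (f.continuous.iterate (b + 1)))) t) = _
      rw [Path.trans_apply, Path.trans_apply]
      split_ifs
      · rfl
      · exact (Function.iterate_add_apply (⇑f) a (b + 1) _).symm

theorem wadd (a b : ℕ) : Wcl p f x₀ hf ω hω (a + b) =
    Wcl p f x₀ hf ω hω a ≫ cls (WpY p f x₀ hf ω hω a b) := by
  induction b with
  | zero => rw [wp_zero, Category.comp_id]; rfl
  | succ b ih =>
      show Wcl p f x₀ hf ω hω ((a + b) + 1) = _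
      rw [wsucc, ih, wp_succ, Category.assoc]

theorem wv (a : ℕ) : Wcl p f x₀ hf ω hω a ≫ Vcl p f x₀ hf ω hω a = 𝟙 _ := by
  rw [Wcl, Vcl, cls_symm]; simp

theorem vw (a : ℕ) : Vcl p f x₀ hf ω hω a ≫ Wcl p f x₀ hf ω hω a = 𝟙 _ := by
  rw [Wcl, Vcl, cls_symm]; simp

theorem Wcl_congr {a b : ℕ} (h : a = b) :
    Wcl p f x₀ hf ω hω a = Wcl p f x₀ hf ω hω b ≫ eps (by rw [h]) := by
  subst h; simp only [eps_self, Category.comp_id]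

end FiberAlgebra
end RB
namespace RB
section FiberAlgebra2

variable {E B : Type} [TopologicalSpace E] [TopologicalSpace B]

@[simp] theorem eps_eps_assoc {X : Type} [TopologicalSpace X] {u v w : X}
    {Z : FundamentalGroupoid X} (h : u = v) (h' : v = w)
    (q : (⟨w⟩ : FundamentalGroupoid X) ⟶ Z) :
    eps h ≫ eps h' ≫ q = eps (h.trans h') ≫ q := by
  subst h h'; simp

theorem mcl_id {X : Type} [TopologicalSpace X] (g : C(X, X)) (u : X) :
    mcl g (𝟙 (⟨u⟩ : FundamentalGroupoid X)) = 𝟙 (⟨g u⟩ : FundamentalGroupoid X) := by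
  show mcl g (cls (Path.refl u)) = _
  rw [mcl_cls, show (Path.refl u).map g.continuous = Path.refl (g u) from
    path_ext fun _ => rfl, cls_refl]

theorem mcl_eps {X : Type} [TopologicalSpace X] (g : C(X, X)) {u v : X} (h : u = v) :
    mcl g (eps h) = eps (congrArg (⇑g) h) := by
  subst h
  show mcl g (𝟙 _) = _
  rw [mcl_id]
  rfl

variable (p : C(E, B)) (f : C(E, E)) (x₀ : E) (hf : ∀ x, p (f x) = p x)
  (ω : Path x₀ (f x₀)) (hω : ∀ t, p (ω t) = p x₀)

theorem mcl_phic_zero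
    (q : (⟨ypt p f x₀ hf 0⟩ : FundamentalGroupoid {x : E // p x = p x₀}) ⟶ ⟨ypt p f x₀ hf 0⟩) :
    mcl (phic p f x₀ hf 0) q = q := by
  refine Quotient.inductionOn q fun γ => ?_
  show mcl (phic p f x₀ hf 0) (cls γ) = cls γ
  rw [mcl_cls]
  exact congrArg cls (path_ext fun t => Subtype.ext rfl)

theorem epk0 (k : ℕ) : ypt p f x₀ hf k = phic p f x₀ hf k (ypt p f x₀ hf 0) :=
  Subtype.ext rfl

theorem epaby (a b : ℕ) : ypt p f x₀ hf (a + b) = phic p f x₀ hf a (ypt p f x₀ hf b) :=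
  Subtype.ext (Function.iterate_add_apply (⇑f) a b x₀)

theorem epaa (a b : ℕ) : phic p f x₀ hf a (phic p f x₀ hf b (ypt p f x₀ hf 0)) =
    phic p f x₀ hf (a + b) (ypt p f x₀ hf 0) :=
  Subtype.ext (Function.iterate_add_apply (⇑f) a b _).symm

/-- Canonically typed version of `mcl (phic k)` on loop classes at the base point. -/
noncomputable def mclE0 (k : ℕ)
    (q : (⟨ypt p f x₀ hf 0⟩ : FundamentalGroupoid {x : E // p x = p x₀}) ⟶ ⟨ypt p f x₀ hf 0⟩) :
    (⟨ypt p f x₀ hf k⟩ : FundamentalGroupoid {x : E // p x = p x₀}) ⟶ ⟨ypt p f x₀ hf k⟩ :=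
  eps (epk0 p f x₀ hf k) ≫ mcl (phic p f x₀ hf k) q ≫ eps (epk0 p f x₀ hf k).symm

theorem mclE0_comp (k : ℕ) (q r) :
    mclE0 p f x₀ hf k (q ≫ r) = mclE0 p f x₀ hf k q ≫ mclE0 p f x₀ hf k r := by
  rw [mclE0, mclE0, mclE0, mcl_comp]
  simp only [Category.assoc, eps_eps_assoc, eps_self, Category.id_comp]

theorem mclE0_id (k : ℕ) : mclE0 p f x₀ hf k (𝟙 _) = 𝟙 _ := by
  rw [mclE0, mcl_id]
  simp only [Category.id_comp, eps_eps, eps_self]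

theorem mclE0_zero (q) : mclE0 p f x₀ hf 0 q = q := by
  refine Quotient.inductionOn q fun γ => ?_
  show mclE0 p f x₀ hf 0 (cls γ) = cls γ
  rw [mclE0, mcl_cls]
  exact (cls_cast3 _ _ (epk0 p f x₀ hf 0) (epk0 p f x₀ hf 0).symm
    fun t => Subtype.ext rfl).symm

theorem mclE0_T (k : ℕ) (α : Path x₀ x₀) (hα : ∀ t, p (α t) = p x₀) :
    mclE0 p f x₀ hf k (Tcl p f x₀ hf α hα) = cls (thMap p f x₀ hf k α hα) := by
  rw [mclE0, Tcl, mcl_cls]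
  exact (cls_cast3 _ _ (epk0 p f x₀ hf k) (epk0 p f x₀ hf k).symm
    fun t => Subtype.ext rfl).symm

theorem eWa' (a b : ℕ) {Z : FundamentalGroupoid {x : E // p x = p x₀}}
    (X : (⟨phic p f x₀ hf a (ypt p f x₀ hf b)⟩ :
      FundamentalGroupoid {x : E // p x = p x₀}) ⟶ Z) :
    eps (epk0 p f x₀ hf a) ≫ mcl (phic p f x₀ hf a) (Wcl p f x₀ hf ω hω b) ≫ X =
      cls (WpY p f x₀ hf ω hω a b) ≫ eps (epaby p f x₀ hf a b) ≫ X := by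
  rw [Wcl, mcl_cls,
    show cls (WpY p f x₀ hf ω hω a b) = eps (epk0 p f x₀ hf a) ≫
      cls ((WY p f x₀ hf ω hω b).map (phic p f x₀ hf a).continuous) ≫
      eps (epaby p f x₀ hf a b).symm from
        cls_cast3 _ _ _ _ fun t => Subtype.ext rfl]
  simp only [Category.assoc, eps_eps_assoc, eps_self, Category.id_comp]

theorem eVa' (a b : ℕ) {Z : FundamentalGroupoid {x : E // p x = p x₀}}
    (X : (⟨ypt p f x₀ hf a⟩ : FundamentalGroupoid {x : E // p x = p x₀}) ⟶ Z) :
    eps (epaby p f x₀ hf a b) ≫ mcl (phic p f x₀ hf a) (Vcl p f x₀ hf ω hω b) ≫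
        eps (epk0 p f x₀ hf a).symm ≫ X =
      cls (WpY p f x₀ hf ω hω a b).symm ≫ X := by
  rw [Vcl, mcl_cls, ← Path.map_symm,
    show cls (WpY p f x₀ hf ω hω a b).symm = eps (epaby p f x₀ hf a b) ≫
      cls ((WY p f x₀ hf ω hω b).map (phic p f x₀ hf a).continuous).symm ≫
      eps (epk0 p f x₀ hf a).symm from
        cls_cast3 _ _ _ _ fun t => Subtype.ext rfl]
  simp only [Category.assoc]

theorem eMM (a b : ℕ) (q) :
    mcl (phic p f x₀ hf a) (mcl (phic p f x₀ hf b) q) =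
      eps (epaa p f x₀ hf a b) ≫ mcl (phic p f x₀ hf (a + b)) q ≫
        eps (epaa p f x₀ hf a b).symm := by
  refine Quotient.inductionOn q fun γ => ?_
  show mcl (phic p f x₀ hf a) (mcl (phic p f x₀ hf b) (cls γ)) =
    eps (epaa p f x₀ hf a b) ≫ mcl (phic p f x₀ hf (a + b)) (cls γ) ≫
      eps (epaa p f x₀ hf a b).symm
  rw [mcl_cls, mcl_cls, mcl_cls]
  exact cls_cast3 _ _ _ _ fun t =>
    Subtype.ext (Function.iterate_add_apply (⇑f) a b _).symm

/-- The operator `f^{kω}` on loop classes. -/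
noncomputable def Fp (k : ℕ)
    (q : (⟨ypt p f x₀ hf 0⟩ : FundamentalGroupoid {x : E // p x = p x₀}) ⟶ ⟨ypt p f x₀ hf 0⟩) :
    (⟨ypt p f x₀ hf 0⟩ : FundamentalGroupoid {x : E // p x = p x₀}) ⟶ ⟨ypt p f x₀ hf 0⟩ :=
  Wcl p f x₀ hf ω hω k ≫ mclE0 p f x₀ hf k q ≫ Vcl p f x₀ hf ω hω k

theorem Vcl_zero : Vcl p f x₀ hf ω hω 0 = 𝟙 _ := by
  rw [Vcl, show (WY p f x₀ hf ω hω 0).symm = Path.refl (ypt p f x₀ hf 0) from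
    path_ext fun t => Subtype.ext rfl, cls_refl]

theorem Fp_zero (q) : Fp p f x₀ hf ω hω 0 q = q := by
  rw [Fp, mclE0_zero, Wcl_zero, Vcl_zero, Category.id_comp, Category.comp_id]

theorem vw_assoc (a : ℕ) {Z : FundamentalGroupoid {x : E // p x = p x₀}}
    (X : (⟨ypt p f x₀ hf a⟩ : FundamentalGroupoid {x : E // p x = p x₀}) ⟶ Z) :
    Vcl p f x₀ hf ω hω a ≫ Wcl p f x₀ hf ω hω a ≫ X = X := by
  rw [← Category.assoc, vw, Category.id_comp]

theorem Fp_comp (k : ℕ) (q r) :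
    Fp p f x₀ hf ω hω k (q ≫ r) = Fp p f x₀ hf ω hω k q ≫ Fp p f x₀ hf ω hω k r := by
  rw [Fp, Fp, Fp, mclE0_comp]
  simp only [Category.assoc]
  rw [vw_assoc]

theorem Fp_id (k : ℕ) : Fp p f x₀ hf ω hω k (𝟙 _) = 𝟙 _ := by
  rw [Fp, mclE0_id, Category.id_comp]
  exact wv p f x₀ hf ω hω k

theorem vadd (a b : ℕ) : Vcl p f x₀ hf ω hω (a + b) =
    cls (WpY p f x₀ hf ω hω a b).symm ≫ Vcl p f x₀ hf ω hω a := by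
  have h0 : Vcl p f x₀ hf ω hω (a + b) = Groupoid.inv (Wcl p f x₀ hf ω hω (a + b)) := rfl
  rw [h0, wadd, inv_comp_rev]
  rfl

theorem Fp_Fp (a b : ℕ) (q) :
    Fp p f x₀ hf ω hω a (Fp p f x₀ hf ω hω b q) = Fp p f x₀ hf ω hω (a + b) q := by
  rw [Fp, Fp, Fp, wadd, vadd]
  rw [mclE0, mclE0, mclE0, mcl_comp, mcl_comp, mcl_comp, mcl_comp]
  simp only [mcl_eps]
  rw [eMM]
  simp only [Category.assoc]
  rw [eWa']
  simp only [eps_eps_assoc]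
  rw [← eps_eps_assoc (epk0 p f x₀ hf (a + b)).symm (epaby p f x₀ hf a b), eVa']

end FiberAlgebra2
end RB
namespace RB
section FiberAlgebra3

variable {E B : Type} [TopologicalSpace E] [TopologicalSpace B]
variable (p : C(E, B)) (f : C(E, E)) (x₀ : E) (hf : ∀ x, p (f x) = p x)
  (ω : Path x₀ (f x₀)) (hω : ∀ t, p (ω t) = p x₀)

theorem fpow_cls (k : ℕ) (α : Path x₀ x₀) (hα : ∀ t, p (α t) = p x₀)
    (hfp : ∀ t, p (fpowLoop f ω k α t) = p x₀) :
    Tcl p f x₀ hf (fpowLoop f ω k α) hfp =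
      Fp p f x₀ hf ω hω k (Tcl p f x₀ hf α hα) := by
  have hpath : liftP p x₀ (fpowLoop f ω k α) hfp (ypt p f x₀ hf 0) (ypt p f x₀ hf 0) rfl rfl =
      ((WY p f x₀ hf ω hω k).trans (thMap p f x₀ hf k α hα)).trans
        (WY p f x₀ hf ω hω k).symm := by
    apply path_ext
    intro t
    apply Subtype.ext
    show (((nPath f ω k).trans (α.map (f.continuous.iterate k))).trans (nPath f ω k).symm) t = _
    rw [Path.trans_apply, Path.trans_apply]
    split_ifs with h1
    · rw [Path.trans_apply, Path.trans_apply]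
      split_ifs <;> rfl
    · rfl
  rw [Tcl, hpath, cls_trans, cls_trans, Fp, mclE0_T, Category.assoc]
  rfl

/-- The product `q · Fp^{0·m}(q) ⋯` realizing `gammaAux` on classes. -/
noncomputable def gprodd (mm : ℕ)
    (q : (⟨ypt p f x₀ hf 0⟩ : FundamentalGroupoid {x : E // p x = p x₀}) ⟶ ⟨ypt p f x₀ hf 0⟩) :
    ℕ → ((⟨ypt p f x₀ hf 0⟩ : FundamentalGroupoid {x : E // p x = p x₀}) ⟶ ⟨ypt p f x₀ hf 0⟩)
  | 0 => 𝟙 _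
  | (j + 1) => gprodd mm q j ≫ Fp p f x₀ hf ω hω (j * mm) q

theorem gammaAux_cls (mm : ℕ) (α : Path x₀ x₀) (hα : ∀ t, p (α t) = p x₀) :
    ∀ (j : ℕ) (hj : ∀ t, p (gammaAux f ω mm α j t) = p x₀),
      Tcl p f x₀ hf (gammaAux f ω mm α j) hj =
        gprodd p f x₀ hf ω hω mm (Tcl p f x₀ hf α hα) j := by
  intro j
  induction j with
  | zero =>
      intro hj
      rw [Tcl, show liftP p x₀ (gammaAux f ω mm α 0) hj (ypt p f x₀ hf 0) (ypt p f x₀ hf 0)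
        rfl rfl = Path.refl (ypt p f x₀ hf 0) from path_ext fun t => Subtype.ext rfl, cls_refl]
      rfl
  | succ j ih =>
      intro hj
      have hfp : ∀ t, p (fpowLoop f ω (j * mm) α t) = p x₀ :=
        (fpowFiberLoop p f hf ω hω (j * mm) ⟨α, hα⟩).2
      have hga : ∀ t, p (gammaAux f ω mm α j t) = p x₀ :=
        fiber_gammaAux hf hω mm ⟨α, hα⟩ j
      have e1 : liftP p x₀ (gammaAux f ω mm α (j + 1)) hj (ypt p f x₀ hf 0)
          (ypt p f x₀ hf 0) rfl rfl =
          (liftP p x₀ (gammaAux f ω mm α j) hga (ypt p f x₀ hf 0) (ypt p f x₀ hf 0)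
            rfl rfl).trans (liftP p x₀ (fpowLoop f ω (j * mm) α) hfp (ypt p f x₀ hf 0)
            (ypt p f x₀ hf 0) rfl rfl) :=
        liftP_trans p x₀ (gammaAux f ω mm α j) (fpowLoop f ω (j * mm) α) hga hfp hj
          _ _ _ rfl rfl rfl
      rw [Tcl, e1, cls_trans]
      show Tcl p f x₀ hf (gammaAux f ω mm α j) hga ≫
        Tcl p f x₀ hf (fpowLoop f ω (j * mm) α) hfp = _
      rw [ih hga, fpow_cls p f x₀ hf ω hω (j * mm) α hα]
      rfl

/-- Shifted products. -/
noncomputable def gsprod (kk : ℕ)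
    (q : (⟨ypt p f x₀ hf 0⟩ : FundamentalGroupoid {x : E // p x = p x₀}) ⟶ ⟨ypt p f x₀ hf 0⟩)
    (s : ℕ) :
    ℕ → ((⟨ypt p f x₀ hf 0⟩ : FundamentalGroupoid {x : E // p x = p x₀}) ⟶ ⟨ypt p f x₀ hf 0⟩)
  | 0 => 𝟙 _
  | (c + 1) => gsprod kk q s c ≫ Fp p f x₀ hf ω hω ((s + c) * kk) q

theorem gsprod_zero (kk : ℕ) (q) : ∀ c, gsprod p f x₀ hf ω hω kk q 0 c =
    gprodd p f x₀ hf ω hω kk q c := by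
  intro c
  induction c with
  | zero => rfl
  | succ c ih =>
      show gsprod p f x₀ hf ω hω kk q 0 c ≫ _ = gprodd p f x₀ hf ω hω kk q c ≫ _
      rw [ih, Nat.zero_add]

theorem gs_split (kk : ℕ) (q) (r : ℕ) : ∀ s, gprodd p f x₀ hf ω hω kk q (r + s) =
    gprodd p f x₀ hf ω hω kk q r ≫ gsprod p f x₀ hf ω hω kk q r s := by
  intro s
  induction s with
  | zero => show _ = _ ≫ 𝟙 _; rw [Category.comp_id]; rfl
  | succ s ih =>
      show gprodd p f x₀ hf ω hω kk q (r + s) ≫ _ =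
        _ ≫ gsprod p f x₀ hf ω hω kk q r s ≫ _
      rw [ih, Category.assoc]
      rfl

theorem Fp_gprod (kk c0 mm : ℕ) (hmm : mm = c0 * kk) (q) (j : ℕ) :
    ∀ c, Fp p f x₀ hf ω hω (j * mm) (gprodd p f x₀ hf ω hω kk q c) =
      gsprod p f x₀ hf ω hω kk q (j * c0) c := by
  intro c
  induction c with
  | zero => exact Fp_id p f x₀ hf ω hω _
  | succ c ih =>
      show Fp p f x₀ hf ω hω (j * mm) (gprodd p f x₀ hf ω hω kk q c ≫ _) =
        gsprod p f x₀ hf ω hω kk q (j * c0) c ≫ _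
      rw [Fp_comp, ih, Fp_Fp,
        show j * mm + c * kk = (j * c0 + c) * kk by subst hmm; ring]

theorem gprod_gprod (kk c0 mm : ℕ) (hmm : mm = c0 * kk) (q) :
    ∀ r, gprodd p f x₀ hf ω hω mm (gprodd p f x₀ hf ω hω kk q c0) r =
      gprodd p f x₀ hf ω hω kk q (r * c0) := by
  intro r
  induction r with
  | zero => rw [Nat.zero_mul]; rfl
  | succ r ih =>
      show gprodd p f x₀ hf ω hω mm (gprodd p f x₀ hf ω hω kk q c0) r ≫ _ = _
      rw [ih, Fp_gprod p f x₀ hf ω hω kk c0 mm hmm q r c0,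
        ← gs_split, show r * c0 + c0 = (r + 1) * c0 from (Nat.succ_mul r c0).symm]

theorem div_div_arith {k m n : ℕ} (hk : 0 < k) (hkm : k ∣ m) (hmn : m ∣ n) :
    n / m * (m / k) = n / k := by
  rcases Nat.eq_zero_or_pos m with hm | hm
  · subst hm
    obtain rfl : n = 0 := Nat.zero_dvd.mp hmn
    simp
  · obtain ⟨a, rfl⟩ := hkm
    obtain ⟨b, rfl⟩ := hmn
    rw [Nat.mul_div_cancel_left b hm, Nat.mul_div_cancel_left a hk, Nat.mul_assoc,
      Nat.mul_div_cancel_left (a * b) hk, Nat.mul_comm]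

include hω in
/-- The key algebraic identity `γ_{m,n} ∘ γ_{k,m} = γ_{k,n}` on loop classes. -/
theorem gamma_comp_cls (k m n : ℕ) (hk : 0 < k) (hkm : k ∣ m) (hmn : m ∣ n)
    (θ : Path x₀ x₀) (hθ : ∀ t, p (θ t) = p x₀)
    (h1 : ∀ t, p (gammaLoop f ω m n (gammaLoop f ω k m θ) t) = p x₀)
    (h2 : ∀ t, p (gammaLoop f ω k m θ t) = p x₀)
    (h3 : ∀ t, p (gammaLoop f ω k n θ t) = p x₀) :
    Tcl p f x₀ hf (gammaLoop f ω m n (gammaLoop f ω k m θ)) h1 =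
      Tcl p f x₀ hf (gammaLoop f ω k n θ) h3 :=
  calc Tcl p f x₀ hf (gammaLoop f ω m n (gammaLoop f ω k m θ)) h1
      = gprodd p f x₀ hf ω hω m (Tcl p f x₀ hf (gammaLoop f ω k m θ) h2) (n / m) :=
        gammaAux_cls p f x₀ hf ω hω m (gammaLoop f ω k m θ) h2 (n / m) h1
    _ = gprodd p f x₀ hf ω hω m
          (gprodd p f x₀ hf ω hω k (Tcl p f x₀ hf θ hθ) (m / k)) (n / m) :=
        congrArg (fun z => gprodd p f x₀ hf ω hω m z (n / m))
          (gammaAux_cls p f x₀ hf ω hω k θ hθ (m / k) h2)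
    _ = gprodd p f x₀ hf ω hω k (Tcl p f x₀ hf θ hθ) (n / m * (m / k)) :=
        gprod_gprod p f x₀ hf ω hω k (m / k) m (Nat.div_mul_cancel hkm).symm _ (n / m)
    _ = gprodd p f x₀ hf ω hω k (Tcl p f x₀ hf θ hθ) (n / k) := by
        rw [div_div_arith hk hkm hmn]
    _ = Tcl p f x₀ hf (gammaLoop f ω k n θ) h3 :=
        (gammaAux_cls p f x₀ hf ω hω k θ hθ (n / k) h3).symm

end FiberAlgebra3
end RB
namespace RB
section Claim

variable {E B : Type} [TopologicalSpace E] [TopologicalSpace B]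
variable (p : C(E, B)) (f : C(E, E)) (x₀ : E) (hf : ∀ x, p (f x) = p x)
  (ω : Path x₀ (f x₀)) (hω : ∀ t, p (ω t) = p x₀)

theorem nPath_congr {a b : ℕ} (h : a = b) (t : I) : nPath f ω a t = nPath f ω b t := by
  subst h; rfl

/-- Lift of `f^[a] ∘ (θ ∗ m(ω))`, the `a`-th block of the stacked boundary. -/
noncomputable def pcY (θ : Path x₀ x₀) (hθ : ∀ t, p (θ t) = p x₀) (mm a : ℕ) :
    Path (ypt p f x₀ hf a) (ypt p f x₀ hf (a + mm)) :=
  liftP p x₀ ((θ.trans (nPath f ω mm)).map (f.continuous.iterate a))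
    (fiber_map hf (fiber_trans hθ (fiber_nPath hf hω mm)) a) _ _ rfl
    (Function.iterate_add_apply (⇑f) a mm x₀).symm

theorem pc_cls (θ : Path x₀ x₀) (hθ : ∀ t, p (θ t) = p x₀) (mm a : ℕ) :
    cls (pcY p f x₀ hf ω hω θ hθ mm a) =
      cls (thMap p f x₀ hf a θ hθ) ≫ cls (WpY p f x₀ hf ω hω a mm) := by
  rw [show pcY p f x₀ hf ω hω θ hθ mm a =
    (thMap p f x₀ hf a θ hθ).trans (WpY p f x₀ hf ω hω a mm) from ?_, cls_trans]
  apply path_ext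
  intro t
  apply Subtype.ext
  show (⇑f)^[a] ((θ.trans (nPath f ω mm)) t) = _
  rw [Path.trans_apply, Path.trans_apply]
  split_ifs <;> rfl

/-- The stacked boundary path `(θ∗mω) ∗ f^m(θ∗mω) ∗ ⋯`, lifted to the fiber. -/
noncomputable def LPY (θ : Path x₀ x₀) (hθ : ∀ t, p (θ t) = p x₀) (mm : ℕ) :
    (j : ℕ) → Path (ypt p f x₀ hf 0) (ypt p f x₀ hf (mm * j + mm))
  | 0 => pcY p f x₀ hf ω hω θ hθ mm 0
  | (j + 1) => (LPY θ hθ mm j).trans (pcY p f x₀ hf ω hω θ hθ mm (mm * j + mm))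

theorem claim (θ : Path x₀ x₀) (hθ : ∀ t, p (θ t) = p x₀) (mm : ℕ) :
    ∀ j, cls (LPY p f x₀ hf ω hω θ hθ mm j) =
      gprodd p f x₀ hf ω hω mm (Tcl p f x₀ hf θ hθ) (j + 1) ≫
        Wcl p f x₀ hf ω hω (mm * j + mm) := by
  intro j
  induction j with
  | zero =>
      show cls (pcY p f x₀ hf ω hω θ hθ mm 0) = _
      rw [pc_cls]
      have hT : cls (thMap p f x₀ hf 0 θ hθ) = Tcl p f x₀ hf θ hθ :=
        congrArg cls (path_ext fun t => Subtype.ext rfl)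
      have hW : cls (WpY p f x₀ hf ω hω 0 mm) = Wcl p f x₀ hf ω hω (mm * 0 + mm) :=
        congrArg cls (path_ext fun t =>
          Subtype.ext (nPath_congr f x₀ ω (by omega : mm * 0 + mm = mm) t).symm)
      have hF : gprodd p f x₀ hf ω hω mm (Tcl p f x₀ hf θ hθ) (0 + 1) =
          Tcl p f x₀ hf θ hθ := by
        show 𝟙 _ ≫ Fp p f x₀ hf ω hω (0 * mm) (Tcl p f x₀ hf θ hθ) = _
        rw [Nat.zero_mul, Fp_zero, Category.id_comp]
      rw [hT, hW, hF]
  | succ j ih =>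
      have key : Wcl p f x₀ hf ω hω (mm * j + mm) ≫
          cls (thMap p f x₀ hf (mm * j + mm) θ hθ) ≫
          cls (WpY p f x₀ hf ω hω (mm * j + mm) mm) =
          Fp p f x₀ hf ω hω ((j + 1) * mm) (Tcl p f x₀ hf θ hθ) ≫
            Wcl p f x₀ hf ω hω (mm * (j + 1) + mm) := by
        have e1 : Fp p f x₀ hf ω hω ((j + 1) * mm) (Tcl p f x₀ hf θ hθ) =
            Wcl p f x₀ hf ω hω (mm * j + mm) ≫
              mclE0 p f x₀ hf (mm * j + mm) (Tcl p f x₀ hf θ hθ) ≫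
              Vcl p f x₀ hf ω hω (mm * j + mm) := by
          rw [show (j + 1) * mm = mm * j + mm by ring]
          rfl
        have e2 : Wcl p f x₀ hf ω hω (mm * (j + 1) + mm) =
            Wcl p f x₀ hf ω hω (mm * j + mm) ≫
              cls (WpY p f x₀ hf ω hω (mm * j + mm) mm) :=
          wadd p f x₀ hf ω hω (mm * j + mm) mm
        rw [e1, e2, mclE0_T]
        simp only [Category.assoc]
        rw [vw_assoc]
      show cls ((LPY p f x₀ hf ω hω θ hθ mm j).trans
        (pcY p f x₀ hf ω hω θ hθ mm (mm * j + mm))) = _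
      rw [cls_trans, ih, pc_cls]
      show _ = (gprodd p f x₀ hf ω hω mm (Tcl p f x₀ hf θ hθ) (j + 1) ≫
        Fp p f x₀ hf ω hω ((j + 1) * mm) (Tcl p f x₀ hf θ hθ)) ≫
        Wcl p f x₀ hf ω hω (mm * (j + 1) + mm)
      simp only [Category.assoc]
      rw [key]

theorem homotopy_of_cls {u v : {x : E // p x = p x₀}} (γ δ : Path u v)
    (h : cls γ = cls δ) :
    ∃ G : C(I × I, E), (∀ s, G (0, s) = (γ s).1) ∧ (∀ s, G (1, s) = (δ s).1) ∧
      (∀ t, G (t, 0) = u.1) ∧ (∀ t, G (t, 1) = v.1) ∧ (∀ z, p (G z) = p x₀) := by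
  obtain ⟨F⟩ := cls_exact h
  refine ⟨⟨fun z => (F z).1, continuous_subtype_val.comp F.toHomotopy.continuous⟩,
    ?_, ?_, ?_, ?_, ?_⟩
  · intro s; exact congrArg Subtype.val (F.apply_zero s)
  · intro s; exact congrArg Subtype.val (F.apply_one s)
  · intro t
    exact congrArg Subtype.val ((F.eq_fst t (Set.mem_insert _ _)).trans γ.source)
  · intro t
    refine congrArg Subtype.val ((F.eq_fst t ?_).trans γ.target)
    exact Set.mem_insert_of_mem _ rfl
  · intro z; exact (F z).2

theorem homotopy_of_cls_eps {u v v' : {x : E // p x = p x₀}} (γ : Path u v)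
    (δ : Path u v') (hv : v' = v) (h : cls γ = cls δ ≫ eps hv) :
    ∃ G : C(I × I, E), (∀ s, G (0, s) = (γ s).1) ∧ (∀ s, G (1, s) = (δ s).1) ∧
      (∀ t, G (t, 0) = u.1) ∧ (∀ t, G (t, 1) = v.1) ∧ (∀ z, p (G z) = p x₀) := by
  subst hv
  rw [eps_self, Category.comp_id] at h
  exact homotopy_of_cls p x₀ γ δ h

end Claim
end RB
namespace RB
section Topology

variable {E B : Type} [TopologicalSpace E] [TopologicalSpace B]

theorem trans_match {W : Type} [TopologicalSpace W] {fa fb fc : C(I, E)}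
    (F : ContinuousMap.Homotopy fa fb) (G : ContinuousMap.Homotopy fb fc)
    {a b c : W} (vm : E → W) (γ : Path a b) (δ : Path b c) (S : Set I)
    (hF : ∀ t s, s ∈ S → vm (F (t, s)) = γ t)
    (hG : ∀ t s, s ∈ S → vm (G (t, s)) = δ t) :
    ∀ t s, s ∈ S → vm ((F.trans G) (t, s)) = (γ.trans δ) t := by
  intro t s hs
  rw [ContinuousMap.Homotopy.trans_apply, Path.trans_apply]
  split_ifs
  · exact hF _ _ hs
  · exact hG _ _ hs

variable (p : C(E, B)) (f : C(E, E)) (x₀ : E) (hf : ∀ x, p (f x) = p x)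
  (ω : Path x₀ (f x₀)) (hω : ∀ t, p (ω t) = p x₀)

/-- The map `t ↦ f^[a] (c t)` as a continuous map. -/
def cmF (a : ℕ) (c : Path x₀ x₀) : C(I, E) :=
  ⟨fun x => (⇑f)^[a] (c x), (f.continuous.iterate a).comp c.continuous⟩

/-- The homotopy `f^[a] ∘ H` (with swapped coordinates), one block of the stack. -/
def pieceH (m a : ℕ) (c : Path x₀ x₀) (H : C(I × I, E))
    (Hb : ∀ t, H (t, 0) = c t) (Ht : ∀ t, H (t, 1) = (iterC f m) (c t)) :
    ContinuousMap.Homotopy (cmF f x₀ a c) (cmF f x₀ (a + m) c) where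
  toFun z := (⇑f)^[a] (H (z.2, z.1))
  continuous_toFun := (f.continuous.iterate a).comp
    (H.continuous.comp (continuous_snd.prodMk continuous_fst))
  map_zero_left x := by
    show (⇑f)^[a] (H (x, 0)) = _
    rw [Hb x]
    rfl
  map_one_left x := by
    show (⇑f)^[a] (H (x, 1)) = _
    rw [Ht x]
    exact (Function.iterate_add_apply (⇑f) a m (c x)).symm

/-- Vertical stacking of the blocks `f^[jm] ∘ H`. -/
noncomputable def KS (m : ℕ) (c : Path x₀ x₀) (H : C(I × I, E))
    (Hb : ∀ t, H (t, 0) = c t) (Ht : ∀ t, H (t, 1) = (iterC f m) (c t)) :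
    (j : ℕ) → ContinuousMap.Homotopy (cmF f x₀ 0 c) (cmF f x₀ (m * j + m) c)
  | 0 => pieceH f x₀ m 0 c H Hb Ht
  | (j + 1) => (KS m c H Hb Ht j).trans (pieceH f x₀ m (m * j + m) c H Hb Ht)

theorem KS_b0 (m : ℕ) (c : Path x₀ x₀) (H : C(I × I, E))
    (Hb : ∀ t, H (t, 0) = c t) (Ht : ∀ t, H (t, 1) = (iterC f m) (c t))
    (θ : Path x₀ x₀) (hθ : ∀ t, p (θ t) = p x₀)
    (Hl : ∀ s, H (0, s) = (θ.trans (nPath f ω m)) s) :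
    ∀ j s, KS f x₀ m c H Hb Ht j (s, 0) =
      (LPY p f x₀ hf ω hω θ hθ m j s).1 := by
  intro j
  induction j with
  | zero =>
      intro s
      show (⇑f)^[0] (H (0, s)) = _
      rw [Hl s]
      rfl
  | succ j ih =>
      intro s
      show ((KS f x₀ m c H Hb Ht j).trans
        (pieceH f x₀ m (m * j + m) c H Hb Ht)) (s, 0) =
        (((LPY p f x₀ hf ω hω θ hθ m j).trans
          (pcY p f x₀ hf ω hω θ hθ m (m * j + m))) s).1
      rw [ContinuousMap.Homotopy.trans_apply, Path.trans_apply]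
      split_ifs
      · exact ih _
      · show (⇑f)^[m * j + m] (H (0, _)) = _
        rw [Hl]
        rfl

theorem KS_b1 (m : ℕ) (c : Path x₀ x₀) (H : C(I × I, E))
    (Hb : ∀ t, H (t, 0) = c t) (Ht : ∀ t, H (t, 1) = (iterC f m) (c t))
    (θ' : Path x₀ x₀) (hθ' : ∀ t, p (θ' t) = p x₀)
    (Hr : ∀ s, H (1, s) = (θ'.trans (nPath f ω m)) s) :
    ∀ j s, KS f x₀ m c H Hb Ht j (s, 1) =
      (LPY p f x₀ hf ω hω θ' hθ' m j s).1 := by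
  intro j
  induction j with
  | zero =>
      intro s
      show (⇑f)^[0] (H (1, s)) = _
      rw [Hr s]
      rfl
  | succ j ih =>
      intro s
      show ((KS f x₀ m c H Hb Ht j).trans
        (pieceH f x₀ m (m * j + m) c H Hb Ht)) (s, 1) =
        (((LPY p f x₀ hf ω hω θ' hθ' m j).trans
          (pcY p f x₀ hf ω hω θ' hθ' m (m * j + m))) s).1
      rw [ContinuousMap.Homotopy.trans_apply, Path.trans_apply]
      split_ifs
      · exact ih _
      · show (⇑f)^[m * j + m] (H (1, _)) = _
        rw [Hr]
        rfl

include hf in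
theorem KS_fiber (m : ℕ) (c : Path x₀ x₀) (H : C(I × I, E))
    (Hb : ∀ t, H (t, 0) = c t) (Ht : ∀ t, H (t, 1) = (iterC f m) (c t))
    (Hp : ∀ t s, p (H (t, s)) = p (c t)) :
    ∀ j s x, p (KS f x₀ m c H Hb Ht j (s, x)) = p (c x) := by
  intro j
  induction j with
  | zero =>
      intro s x
      exact (fiber_iterate hf 0 (H (x, s))).trans (Hp x s)
  | succ j ih =>
      intro s x
      show p (((KS f x₀ m c H Hb Ht j).trans
        (pieceH f x₀ m (m * j + m) c H Hb Ht)) (s, x)) = _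
      rw [ContinuousMap.Homotopy.trans_apply]
      split_ifs
      · exact ih _ _
      · exact (fiber_iterate hf (m * j + m) (H (x, _))).trans (Hp x _)

end Topology
end RB
namespace RB
section Assembly

variable {E B : Type} [TopologicalSpace E] [TopologicalSpace B]
variable (p : C(E, B)) (f : C(E, E)) (x₀ : E) (hf : ∀ x, p (f x) = p x)
  (ω : Path x₀ (f x₀)) (hω : ∀ t, p (ω t) = p x₀)

include hf hω in
theorem gamma_wd (m n : ℕ) (hmn : m ∣ n) (θ θ' : FiberLoop p x₀)
    (hrel : ReidemeisterRelB p (iterC f m) (nPath f ω m) θ θ') :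
    Quot.mk (ReidemeisterRelB p (iterC f n) (nPath f ω n))
        (gammaFiberLoop p f hf ω hω m n θ) =
      Quot.mk (ReidemeisterRelB p (iterC f n) (nPath f ω n))
        (gammaFiberLoop p f hf ω hω m n θ') := by
  cases hQ : n / m with
  | zero =>
      have : gammaFiberLoop p f hf ω hω m n θ = gammaFiberLoop p f hf ω hω m n θ' := by
        apply Subtype.ext
        show gammaAux f ω m θ.1 (n / m) = gammaAux f ω m θ'.1 (n / m)
        rw [hQ]
        rfl
      rw [this]
  | succ Q =>
      obtain ⟨c, H, Hb, Hl, Ht, Hr, Hp⟩ := hrel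
      have hn : m * Q + m = n := by
        have h1 : n / m * m = n := Nat.div_mul_cancel hmn
        rw [hQ] at h1
        calc m * Q + m = (Q + 1) * m := by ring
          _ = n := h1
      have pf : ypt p f x₀ hf (m * Q + m) = ypt p f x₀ hf n := congrArg _ hn
      -- θ side
      have hθγ : ∀ t, p ((gammaLoop f ω m n θ.1) t) = p x₀ :=
        (gammaFiberLoop p f hf ω hω m n θ).2
      have hθγn : ∀ t, p (((gammaLoop f ω m n θ.1).trans (nPath f ω n)) t) = p x₀ :=
        fiber_trans hθγ (fiber_nPath hf hω n)
      have hθγ' : ∀ t, p ((gammaLoop f ω m n θ'.1) t) = p x₀ :=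
        (gammaFiberLoop p f hf ω hω m n θ').2
      have hθγn' : ∀ t, p (((gammaLoop f ω m n θ'.1).trans (nPath f ω n)) t) = p x₀ :=
        fiber_trans hθγ' (fiber_nPath hf hω n)
      have cA : cls (liftP p x₀ ((gammaLoop f ω m n θ.1).trans (nPath f ω n)) hθγn
          (ypt p f x₀ hf 0) (ypt p f x₀ hf n) rfl rfl) =
          cls (LPY p f x₀ hf ω hω θ.1 θ.2 m Q) ≫ eps pf := by
        have c1 : liftP p x₀ ((gammaLoop f ω m n θ.1).trans (nPath f ω n)) hθγn
            (ypt p f x₀ hf 0) (ypt p f x₀ hf n) rfl rfl =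
            (liftP p x₀ (gammaLoop f ω m n θ.1) hθγ (ypt p f x₀ hf 0) (ypt p f x₀ hf 0)
              rfl rfl).trans (WY p f x₀ hf ω hω n) :=
          liftP_trans p x₀ _ _ hθγ (fiber_nPath hf hω n) hθγn _ _ _ rfl rfl rfl
        have c2 : Tcl p f x₀ hf (gammaLoop f ω m n θ.1) hθγ =
            gprodd p f x₀ hf ω hω m (Tcl p f x₀ hf θ.1 θ.2) (n / m) :=
          gammaAux_cls p f x₀ hf ω hω m θ.1 θ.2 (n / m) hθγ
        have c3 : Wcl p f x₀ hf ω hω n = Wcl p f x₀ hf ω hω (m * Q + m) ≫ eps pf :=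
          Wcl_congr p f x₀ hf ω hω hn.symm
        rw [c1, cls_trans]
        show Tcl p f x₀ hf (gammaLoop f ω m n θ.1) hθγ ≫ Wcl p f x₀ hf ω hω n = _
        rw [c2, hQ, c3, claim p f x₀ hf ω hω θ.1 θ.2 m Q, Category.assoc]
      have cA' : cls (liftP p x₀ ((gammaLoop f ω m n θ'.1).trans (nPath f ω n)) hθγn'
          (ypt p f x₀ hf 0) (ypt p f x₀ hf n) rfl rfl) =
          cls (LPY p f x₀ hf ω hω θ'.1 θ'.2 m Q) ≫ eps pf := by
        have c1 : liftP p x₀ ((gammaLoop f ω m n θ'.1).trans (nPath f ω n)) hθγn'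
            (ypt p f x₀ hf 0) (ypt p f x₀ hf n) rfl rfl =
            (liftP p x₀ (gammaLoop f ω m n θ'.1) hθγ' (ypt p f x₀ hf 0) (ypt p f x₀ hf 0)
              rfl rfl).trans (WY p f x₀ hf ω hω n) :=
          liftP_trans p x₀ _ _ hθγ' (fiber_nPath hf hω n) hθγn' _ _ _ rfl rfl rfl
        have c2 : Tcl p f x₀ hf (gammaLoop f ω m n θ'.1) hθγ' =
            gprodd p f x₀ hf ω hω m (Tcl p f x₀ hf θ'.1 θ'.2) (n / m) :=
          gammaAux_cls p f x₀ hf ω hω m θ'.1 θ'.2 (n / m) hθγ'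
        have c3 : Wcl p f x₀ hf ω hω n = Wcl p f x₀ hf ω hω (m * Q + m) ≫ eps pf :=
          Wcl_congr p f x₀ hf ω hω hn.symm
        rw [c1, cls_trans]
        show Tcl p f x₀ hf (gammaLoop f ω m n θ'.1) hθγ' ≫ Wcl p f x₀ hf ω hω n = _
        rw [c2, hQ, c3, claim p f x₀ hf ω hω θ'.1 θ'.2 m Q, Category.assoc]
      -- extract homotopies
      obtain ⟨GA, hGA0, hGA1, hGAb, hGAt, hGAp⟩ :=
        homotopy_of_cls_eps p x₀ _ _ pf cA
      have cB : cls (LPY p f x₀ hf ω hω θ'.1 θ'.2 m Q) =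
          cls (liftP p x₀ ((gammaLoop f ω m n θ'.1).trans (nPath f ω n)) hθγn'
            (ypt p f x₀ hf 0) (ypt p f x₀ hf n) rfl rfl) ≫ eps pf.symm := by
        rw [cA', Category.assoc, eps_cancel, Category.comp_id]
      obtain ⟨GB, hGB0, hGB1, hGBb, hGBt, hGBp⟩ :=
        homotopy_of_cls_eps p x₀ _ _ pf.symm cB
      -- continuous boundary maps
      let LC : C(I, E) := ⟨fun s => (LPY p f x₀ hf ω hω θ.1 θ.2 m Q s).1,
        continuous_subtype_val.comp (LPY p f x₀ hf ω hω θ.1 θ.2 m Q).continuous⟩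
      let LC' : C(I, E) := ⟨fun s => (LPY p f x₀ hf ω hω θ'.1 θ'.2 m Q s).1,
        continuous_subtype_val.comp (LPY p f x₀ hf ω hω θ'.1 θ'.2 m Q).continuous⟩
      let P1 : Path x₀ ((⇑f)^[n] x₀) := (gammaLoop f ω m n θ.1).trans (nPath f ω n)
      let P2 : Path x₀ ((⇑f)^[n] x₀) := (gammaLoop f ω m n θ'.1).trans (nPath f ω n)
      let A : ContinuousMap.Homotopy P1.toContinuousMap LC :=
        ⟨GA, fun s => hGA0 s, fun s => hGA1 s⟩
      let Mid : ContinuousMap.Homotopy LC LC' :=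
        ⟨⟨fun z => KS f x₀ m c H Hb Ht Q (z.2, z.1),
          (KS f x₀ m c H Hb Ht Q).continuous.comp
            (continuous_snd.prodMk continuous_fst)⟩,
          fun s => KS_b0 p f x₀ hf ω hω m c H Hb Ht θ.1 θ.2 Hl Q s,
          fun s => KS_b1 p f x₀ hf ω hω m c H Hb Ht θ'.1 θ'.2 Hr Q s⟩
      let Bh : ContinuousMap.Homotopy LC' P2.toContinuousMap :=
        ⟨GB, fun s => hGB0 s, fun s => hGB1 s⟩
      let HH := A.trans (Mid.trans Bh)
      let c' : Path x₀ x₀ := (Path.refl x₀).trans (c.trans (Path.refl x₀))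
      apply Quot.sound
      refine ⟨c', HH.toContinuousMap, ?_, ?_, ?_, ?_, ?_⟩
      · -- bottom boundary is c'
        intro t
        have h1 : ∀ t s, s ∈ ({0} : Set I) → id (Mid.trans Bh (t, s)) =
            (c.trans (Path.refl x₀)) t := by
          refine trans_match Mid Bh id c (Path.refl x₀) {0} ?_ ?_
          · intro t s hs
            rw [Set.eq_of_mem_singleton hs]
            show KS f x₀ m c H Hb Ht Q (0, t) = c t
            exact (KS f x₀ m c H Hb Ht Q).apply_zero t
          · intro t s hs
            rw [Set.eq_of_mem_singleton hs]
            exact hGBb t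
        have h2 := trans_match A (Mid.trans Bh) id (Path.refl x₀)
          (c.trans (Path.refl x₀)) {0}
          (fun t s hs => by rw [Set.eq_of_mem_singleton hs]; exact hGAb t) h1
        exact h2 t 0 rfl
      · intro s
        exact HH.apply_zero s
      · -- top boundary is f^[n] ∘ c'
        intro t
        have h1 : ∀ t s, s ∈ ({1} : Set I) → id (Mid.trans Bh (t, s)) =
            ((c.map (iterC f n).continuous).trans
              ((Path.refl x₀).map (iterC f n).continuous)) t := by
          refine trans_match Mid Bh id _ _ {1} ?_ ?_
          · intro t s hs
            rw [Set.eq_of_mem_singleton hs]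
            show KS f x₀ m c H Hb Ht Q (1, t) = (⇑f)^[n] (c t)
            rw [(KS f x₀ m c H Hb Ht Q).apply_one t]
            show (⇑f)^[m * Q + m] (c t) = (⇑f)^[n] (c t)
            rw [hn]
          · intro t s hs
            rw [Set.eq_of_mem_singleton hs]
            show GB (t, 1) = (⇑f)^[n] x₀
            rw [hGBt t]
            show (⇑f)^[m * Q + m] x₀ = (⇑f)^[n] x₀
            rw [hn]
        have h2 := trans_match A (Mid.trans Bh) id
          ((Path.refl x₀).map (iterC f n).continuous) _ {1}
          (fun t s hs => by rw [Set.eq_of_mem_singleton hs]; exact hGAt t) h1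
        have h3 := h2 t 1 rfl
        rw [show ((Path.refl x₀).map (iterC f n).continuous).trans
          ((c.map (iterC f n).continuous).trans
            ((Path.refl x₀).map (iterC f n).continuous)) =
          c'.map (iterC f n).continuous by
            simp only [c', Path.map_trans]] at h3
        exact h3
      · intro s
        exact HH.apply_one s
      · -- fiber condition
        intro t s
        have h1 : ∀ t s, s ∈ (Set.univ : Set I) → p (Mid.trans Bh (t, s)) =
            ((c.map p.continuous).trans ((Path.refl x₀).map p.continuous)) t := by
          refine trans_match Mid Bh (⇑p) _ _ Set.univ ?_ ?_
          · intro t s _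
            exact KS_fiber p f x₀ hf m c H Hb Ht Hp Q s t
          · intro t s _
            exact hGBp (t, s)
        have h2 := trans_match A (Mid.trans Bh) (⇑p)
          ((Path.refl x₀).map p.continuous) _ Set.univ
          (fun t s _ => hGAp (t, s)) h1
        have h3 := h2 t s trivial
        rw [show ((Path.refl x₀).map p.continuous).trans
          ((c.map p.continuous).trans ((Path.refl x₀).map p.continuous)) =
          c'.map p.continuous by simp only [c', Path.map_trans]] at h3
        exact h3

include hf hω in
theorem gamma_comp_rel (k m n : ℕ) (hk : 0 < k) (hkm : k ∣ m) (hmn : m ∣ n)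
    (θ : FiberLoop p x₀) :
    ReidemeisterRelB p (iterC f n) (nPath f ω n)
      (gammaFiberLoop p f hf ω hω m n (gammaFiberLoop p f hf ω hω k m θ))
      (gammaFiberLoop p f hf ω hω k n θ) := by
  have h1 : ∀ t, p ((gammaLoop f ω m n (gammaLoop f ω k m θ.1)) t) = p x₀ :=
    (gammaFiberLoop p f hf ω hω m n (gammaFiberLoop p f hf ω hω k m θ)).2
  have h2 : ∀ t, p ((gammaLoop f ω k m θ.1) t) = p x₀ :=
    (gammaFiberLoop p f hf ω hω k m θ).2
  have h3 : ∀ t, p ((gammaLoop f ω k n θ.1) t) = p x₀ :=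
    (gammaFiberLoop p f hf ω hω k n θ).2
  have hcls := gamma_comp_cls p f x₀ hf ω hω k m n hk hkm hmn θ.1 θ.2 h1 h2 h3
  have g1 : ∀ t, p (((gammaLoop f ω m n (gammaLoop f ω k m θ.1)).trans (nPath f ω n)) t)
      = p x₀ := fiber_trans h1 (fiber_nPath hf hω n)
  have g3 : ∀ t, p (((gammaLoop f ω k n θ.1).trans (nPath f ω n)) t) = p x₀ :=
    fiber_trans h3 (fiber_nPath hf hω n)
  have e1 : liftP p x₀ ((gammaLoop f ω m n (gammaLoop f ω k m θ.1)).trans (nPath f ω n))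
      g1 (ypt p f x₀ hf 0) (ypt p f x₀ hf n) rfl rfl =
      (liftP p x₀ (gammaLoop f ω m n (gammaLoop f ω k m θ.1)) h1 (ypt p f x₀ hf 0)
        (ypt p f x₀ hf 0) rfl rfl).trans (WY p f x₀ hf ω hω n) :=
    liftP_trans p x₀ _ _ h1 (fiber_nPath hf hω n) g1 _ _ _ rfl rfl rfl
  have e3 : liftP p x₀ ((gammaLoop f ω k n θ.1).trans (nPath f ω n)) g3
      (ypt p f x₀ hf 0) (ypt p f x₀ hf n) rfl rfl =
      (liftP p x₀ (gammaLoop f ω k n θ.1) h3 (ypt p f x₀ hf 0)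
        (ypt p f x₀ hf 0) rfl rfl).trans (WY p f x₀ hf ω hω n) :=
    liftP_trans p x₀ _ _ h3 (fiber_nPath hf hω n) g3 _ _ _ rfl rfl rfl
  have hclseq : cls (liftP p x₀
      ((gammaLoop f ω m n (gammaLoop f ω k m θ.1)).trans (nPath f ω n)) g1
      (ypt p f x₀ hf 0) (ypt p f x₀ hf n) rfl rfl) =
      cls (liftP p x₀ ((gammaLoop f ω k n θ.1).trans (nPath f ω n)) g3
        (ypt p f x₀ hf 0) (ypt p f x₀ hf n) rfl rfl) := by
    rw [e1, cls_trans, e3, cls_trans]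
    show Tcl p f x₀ hf (gammaLoop f ω m n (gammaLoop f ω k m θ.1)) h1 ≫ _ =
      Tcl p f x₀ hf (gammaLoop f ω k n θ.1) h3 ≫ _
    rw [hcls]
  obtain ⟨G, hG0, hG1, hGb, hGt, hGp⟩ := homotopy_of_cls p x₀ _ _ hclseq
  exact ⟨Path.refl x₀, G, fun t => hGb t, fun s => hG0 s, fun t => hGt t,
    fun s => hG1 s, fun t s => hGp (t, s)⟩

end Assembly
end RB
theorem gamma_induced_on_reidemeister {E B : Type} [TopologicalSpace E] [TopologicalSpace B]
    [CompactSpace E] [CompactSpace B] [PathConnectedSpace E] [PathConnectedSpace B]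
    [T2Space E] [T2Space B] {dE dB : ℕ}
    [ChartedSpace (EuclideanSpace ℝ (Fin dE)) E]
    [ChartedSpace (EuclideanSpace ℝ (Fin dB)) B]
    (p : C(E, B)) (hp : IsHurewiczFibration p)
    (f : C(E, E)) (hf : ∀ x, p (f x) = p x)
    (x₀ : E) (ω : Path x₀ (f x₀)) (hω : ∀ t, p (ω t) = p x₀)
    (k m n : ℕ) (hk : 0 < k) (hkm : k ∣ m) (hmn : m ∣ n) :
    (∃ G : ReidemeisterSetB p (iterC f m) (nPath f ω m) →
        ReidemeisterSetB p (iterC f n) (nPath f ω n),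
      IsGammaMap p f hf ω hω m n G) ∧
    ∀ (Gmn : ReidemeisterSetB p (iterC f m) (nPath f ω m) →
        ReidemeisterSetB p (iterC f n) (nPath f ω n))
      (Gkm : ReidemeisterSetB p (iterC f k) (nPath f ω k) →
        ReidemeisterSetB p (iterC f m) (nPath f ω m))
      (Gkn : ReidemeisterSetB p (iterC f k) (nPath f ω k) →
        ReidemeisterSetB p (iterC f n) (nPath f ω n)),
      IsGammaMap p f hf ω hω m n Gmn → IsGammaMap p f hf ω hω k m Gkm →
      IsGammaMap p f hf ω hω k n Gkn → Gmn ∘ Gkm = Gkn := by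
  constructor
  · exact ⟨Quot.lift (fun θ => Quot.mk _ (gammaFiberLoop p f hf ω hω m n θ))
      (fun θ θ' hrel => RB.gamma_wd p f x₀ hf ω hω m n hmn θ θ' hrel),
      fun θ => rfl⟩
  · intro Gmn Gkm Gkn h1 h2 h3
    funext x
    obtain ⟨θ, rfl⟩ := Quot.exists_rep x
    show Gmn (Gkm (Quot.mk _ θ)) = Gkn (Quot.mk _ θ)
    rw [h2 θ, h1 (gammaFiberLoop p f hf ω hω k m θ), h3 θ]
    exact Quot.sound (RB.gamma_comp_rel p f x₀ hf ω hω k m n hk hkm hmn θ)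
end

section
/- For m | n the diagram commutes: [γ_{m,n}] ∘ [f^ω] = [f^ω] ∘ [γ_{m,n}] as maps R_B(f^m; x₀, m(ω)) → R_B(f^n; x₀, n(ω)). Consequently, if a class [α]_n ∈ R_B(f^n; x₀, n(ω)) is reducible to m, then every element of its [f^ω]-orbit is also reducible to m. -/
open unitInterval

variable {E B : Type} [TopologicalSpace E] [TopologicalSpace B]

open CategoryTheory

attribute [local instance] Path.Homotopic.setoid

namespace GammaCommAux

variable {E B : Type} [TopologicalSpace E] [TopologicalSpace B]

variable (p : C(E, B)) (x₀ : E)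

/-- The fiber of `p` through `x₀`, as a subspace of `E`. -/
abbrev Fib : Type := {x : E // p x = p x₀}

/-- Lift a path of `E` lying in the fiber to a path in the fiber. -/
def liftPath {a b : E} (γ : Path a b) (hγ : ∀ t, p (γ t) = p x₀) :
    Path (⟨a, γ.source ▸ hγ 0⟩ : Fib p x₀) ⟨b, γ.target ▸ hγ 1⟩ where
  toFun t := ⟨γ t, hγ t⟩
  continuous_toFun := γ.continuous.subtype_mk _
  source' := Subtype.ext γ.source
  target' := Subtype.ext γ.target

@[simp] theorem liftPath_apply {a b : E} (γ : Path a b) (hγ : ∀ t, p (γ t) = p x₀) (t : I) :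
    (liftPath p x₀ γ hγ t : E) = γ t := rfl

theorem lift_trans {a b c : E} (γ : Path a b) (δ : Path b c)
    (hγ : ∀ t, p (γ t) = p x₀) (hδ : ∀ t, p (δ t) = p x₀)
    (h : ∀ t, p ((γ.trans δ) t) = p x₀) :
    liftPath p x₀ (γ.trans δ) h = (liftPath p x₀ γ hγ).trans (liftPath p x₀ δ hδ) := by
  ext t
  show ((γ.trans δ) t : E) = (((liftPath p x₀ γ hγ).trans (liftPath p x₀ δ hδ)) t : E)
  rw [Path.trans_apply, Path.trans_apply]
  split_ifs <;> rfl

theorem lift_symm {a b : E} (γ : Path a b)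
    (hγ : ∀ t, p (γ t) = p x₀) (h : ∀ t, p (γ.symm t) = p x₀) :
    liftPath p x₀ γ.symm h = (liftPath p x₀ γ hγ).symm := rfl

variable (f : C(E, E)) (hf : ∀ x, p (f x) = p x)

/-- The `k`-th iterate of `f`, restricted to the fiber. -/
@[reducible] def fk (k : ℕ) : C(Fib p x₀, Fib p x₀) where
  toFun y := ⟨(⇑f)^[k] y.1, by rw [fiber_iterate hf k, y.2]⟩
  continuous_toFun := by
    exact ((f.continuous.iterate k).comp continuous_subtype_val).subtype_mk _

theorem lift_map {a b : E} (γ : Path a b) (hγ : ∀ t, p (γ t) = p x₀) (k : ℕ)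
    (h : ∀ t, p ((γ.map (f.continuous.iterate k)) t) = p x₀) :
    liftPath p x₀ (γ.map (f.continuous.iterate k)) h
      = (liftPath p x₀ γ hγ).map (fk p x₀ f hf k).continuous := by
  ext t
  rfl

/-- Objects of the fundamental groupoid of the fiber. -/
def fgmk (y : Fib p x₀) : FundamentalGroupoid (Fib p x₀) := ⟨y⟩

/-- A path class in the fiber, as a morphism of the fundamental groupoid. -/
def qh {a b : Fib p x₀} (γ : Path a b) : fgmk p x₀ a ⟶ fgmk p x₀ b := ⟦γ⟧

/-- The map induced on homotopy classes of paths in the fiber by a self-map of the fiber. -/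
def M (g : C(Fib p x₀, Fib p x₀)) {a b : Fib p x₀} (P : fgmk p x₀ a ⟶ fgmk p x₀ b) :
    fgmk p x₀ (g a) ⟶ fgmk p x₀ (g b) :=
  Path.Homotopic.Quotient.map (x₀ := a) (x₁ := b) P g

theorem q_trans {a b c : Fib p x₀} (γ : Path a b) (δ : Path b c) :
    qh p x₀ (γ.trans δ) = qh p x₀ γ ≫ qh p x₀ δ := rfl

theorem q_symm {a b : Fib p x₀} (γ : Path a b) :
    qh p x₀ γ.symm = inv (qh p x₀ γ) := by
  rw [← Groupoid.inv_eq_inv]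
  rfl

theorem M_mk (g : C(Fib p x₀, Fib p x₀)) {a b : Fib p x₀} (γ : Path a b) :
    M p x₀ g (qh p x₀ γ) = qh p x₀ (γ.map g.continuous) := rfl

theorem M_comp (g : C(Fib p x₀, Fib p x₀)) {a b c : Fib p x₀}
    (P : fgmk p x₀ a ⟶ fgmk p x₀ b) (Q : fgmk p x₀ b ⟶ fgmk p x₀ c) :
    M p x₀ g (P ≫ Q) = M p x₀ g P ≫ M p x₀ g Q := by
  refine Quotient.inductionOn₂ P Q fun γ δ => ?_
  show M p x₀ g (qh p x₀ (γ.trans δ)) = M p x₀ g (qh p x₀ γ) ≫ M p x₀ g (qh p x₀ δ)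
  rw [M_mk, M_mk, M_mk, ← q_trans, Path.map_trans]

theorem M_M (g h : C(Fib p x₀, Fib p x₀)) {a b : Fib p x₀}
    (P : fgmk p x₀ a ⟶ fgmk p x₀ b) :
    M p x₀ g (M p x₀ h P) = M p x₀ (g.comp h) P := by
  refine Quotient.inductionOn P fun γ => ?_
  show M p x₀ g (M p x₀ h (qh p x₀ γ)) = M p x₀ (g.comp h) (qh p x₀ γ)
  rw [M_mk, M_mk, M_mk, Path.map_map]

theorem M_inv (g : C(Fib p x₀, Fib p x₀)) {a b : Fib p x₀}
    (P : fgmk p x₀ a ⟶ fgmk p x₀ b) :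
    M p x₀ g (inv P) = inv (M p x₀ g P) := by
  refine Quotient.inductionOn P fun γ => ?_
  show M p x₀ g (inv (qh p x₀ γ)) = inv (M p x₀ g (qh p x₀ γ))
  rw [← q_symm, M_mk, M_mk, ← q_symm, Path.map_symm]

theorem M_one (g : C(Fib p x₀, Fib p x₀)) (a : Fib p x₀) :
    M p x₀ g (𝟙 (fgmk p x₀ a)) = 𝟙 (fgmk p x₀ (g a)) := rfl

theorem M_congr {g h : C(Fib p x₀, Fib p x₀)} (hgh : g = h) {a b : Fib p x₀}
    (P : fgmk p x₀ a ⟶ fgmk p x₀ b) :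
    M p x₀ g P = eqToHom (by rw [hgh]) ≫ M p x₀ h P ≫ eqToHom (by rw [hgh]) := by
  subst hgh
  simp

end GammaCommAux
namespace GammaCommAux

variable {E B : Type} [TopologicalSpace E] [TopologicalSpace B]
variable (p : C(E, B)) (x₀ : E) (f : C(E, E)) (hf : ∀ x, p (f x) = p x)
variable (ω : Path x₀ (f x₀)) (hω : ∀ t, p (ω t) = p x₀)

/-- The basepoint, as a point of the fiber. -/
def y0 : Fib p x₀ := ⟨x₀, rfl⟩

/-- The class of the lifted path `k(ω)` in the fundamental groupoid of the fiber. -/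
noncomputable def Ak (k : ℕ) :
    fgmk p x₀ (y0 p x₀) ⟶ fgmk p x₀ (fk p x₀ f hf k (y0 p x₀)) :=
  qh p x₀ (liftPath p x₀ (nPath f ω k) (fiber_nPath hf hω k))

/-- Conjugation by `k(ω)` composed with `f^k`, on the fundamental group of the fiber. -/
noncomputable def Phi (k : ℕ) (α : fgmk p x₀ (y0 p x₀) ⟶ fgmk p x₀ (y0 p x₀)) :
    fgmk p x₀ (y0 p x₀) ⟶ fgmk p x₀ (y0 p x₀) :=
  Ak p x₀ f hf ω hω k ≫ M p x₀ (fk p x₀ f hf k) α ≫ inv (Ak p x₀ f hf ω hω k)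

theorem Ak_zero : Ak p x₀ f hf ω hω 0 = 𝟙 (fgmk p x₀ (y0 p x₀)) := rfl

theorem Ak_succ (k : ℕ) :
    Ak p x₀ f hf ω hω (k + 1)
      = Ak p x₀ f hf ω hω k ≫ M p x₀ (fk p x₀ f hf k) (Ak p x₀ f hf ω hω 1) := by
  cases k with
  | zero =>
    have h1 : M p x₀ (fk p x₀ f hf 0) (Ak p x₀ f hf ω hω 1) = Ak p x₀ f hf ω hω 1 := rfl
    rw [h1, Ak_zero]
    exact (Category.id_comp _).symm
  | succ k =>
    have e1 : Ak p x₀ f hf ω hω (k + 2)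
        = qh p x₀ ((liftPath p x₀ (nPath f ω (k + 1)) (fiber_nPath hf hω (k + 1))).trans
            ((liftPath p x₀ ω hω).map (fk p x₀ f hf (k + 1)).continuous)) := by
      show qh p x₀ (liftPath p x₀
          ((nPath f ω (k + 1)).trans (ω.map (f.continuous.iterate (k + 1))))
          (fiber_trans (fiber_nPath hf hω (k + 1)) (fiber_map hf hω (k + 1)))) = _
      rw [lift_trans p x₀ _ _ (fiber_nPath hf hω (k + 1)) (fiber_map hf hω (k + 1)),
        lift_map p x₀ f hf ω hω (k + 1)]
    rw [e1]
    rfl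

/-- Conjugating a morphism of the fundamental groupoid by `eqToHom`s. -/
theorem conj_eq {a b c d : Fib p x₀} (hac : a = c) (hdb : d = b)
    (P : fgmk p x₀ a ⟶ fgmk p x₀ b) (Q : fgmk p x₀ c ⟶ fgmk p x₀ d) (h : HEq P Q) :
    P = eqToHom (congrArg (fgmk p x₀) hac) ≫ Q ≫ eqToHom (congrArg (fgmk p x₀) hdb) := by
  subst hac
  subst hdb
  rw [eq_of_heq h]
  simp

/-- Endpoint bookkeeping equality. -/
theorem ept (k : ℕ) (a : Fib p x₀) :
    fk p x₀ f hf (k + 1) a = fk p x₀ f hf 1 (fk p x₀ f hf k a) :=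
  Subtype.ext (Function.iterate_succ_apply' f k a.1)

theorem M_M_fk1 (k : ℕ) {a b : Fib p x₀} (P : fgmk p x₀ a ⟶ fgmk p x₀ b) :
    M p x₀ (fk p x₀ f hf k) (M p x₀ (fk p x₀ f hf 1) P)
      = M p x₀ (fk p x₀ f hf (k + 1)) P :=
  Quotient.inductionOn P fun _ => rfl

theorem M_M_1k (k : ℕ) {a b : Fib p x₀} (P : fgmk p x₀ a ⟶ fgmk p x₀ b) :
    M p x₀ (fk p x₀ f hf 1) (M p x₀ (fk p x₀ f hf k) P)
      = eqToHom (congrArg (fgmk p x₀) (ept p x₀ f hf k a).symm)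
          ≫ M p x₀ (fk p x₀ f hf (k + 1)) P
          ≫ eqToHom (congrArg (fgmk p x₀) (ept p x₀ f hf k b)) := by
  refine conj_eq p x₀ (ept p x₀ f hf k a).symm (ept p x₀ f hf k b) _ _ ?_
  refine Quotient.inductionOn P fun γ => ?_
  exact Path.Homotopic.hpath_hext fun t =>
    Subtype.ext (Function.iterate_succ_apply' f k (γ t).1).symm

theorem A1_M (k : ℕ) :
    Ak p x₀ f hf ω hω 1 ≫ M p x₀ (fk p x₀ f hf 1) (Ak p x₀ f hf ω hω k)
      = Ak p x₀ f hf ω hω (k + 1)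
          ≫ eqToHom (congrArg (fgmk p x₀) (ept p x₀ f hf k (y0 p x₀))) := by
  induction k with
  | zero =>
    have h1 : M p x₀ (fk p x₀ f hf 1) (Ak p x₀ f hf ω hω 0)
        = 𝟙 (fgmk p x₀ (fk p x₀ f hf 1 (y0 p x₀))) := rfl
    have h2 : congrArg (fgmk p x₀) (ept p x₀ f hf 0 (y0 p x₀)) = rfl := rfl
    rw [h1]
    exact (Category.comp_id _).trans (Category.comp_id _).symm
  | succ k ih =>
    erw [Ak_succ p x₀ f hf ω hω k, M_comp, ← Category.assoc, ih,
      M_M_1k p x₀ f hf k (Ak p x₀ f hf ω hω 1),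
      Ak_succ p x₀ f hf ω hω (k + 1)]
    erw [Category.assoc, eqToHom_trans_assoc, eqToHom_refl, Category.id_comp, Category.assoc]
    rfl

theorem Phi_one (k : ℕ) :
    Phi p x₀ f hf ω hω k (𝟙 (fgmk p x₀ (y0 p x₀))) = 𝟙 (fgmk p x₀ (y0 p x₀)) := by
  rw [Phi, M_one, Category.id_comp, IsIso.hom_inv_id]

theorem Phi_mul (k : ℕ) (α β : fgmk p x₀ (y0 p x₀) ⟶ fgmk p x₀ (y0 p x₀)) :
    Phi p x₀ f hf ω hω k (α ≫ β)
      = Phi p x₀ f hf ω hω k α ≫ Phi p x₀ f hf ω hω k β := by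
  simp [Phi, M_comp, Category.assoc]

theorem Phi_comm1 (k : ℕ) (α : fgmk p x₀ (y0 p x₀) ⟶ fgmk p x₀ (y0 p x₀)) :
    Phi p x₀ f hf ω hω k (Phi p x₀ f hf ω hω 1 α) = Phi p x₀ f hf ω hω (k + 1) α := by
  simp only [Phi, M_comp, M_inv, M_M_fk1]
  simp only [Ak_succ p x₀ f hf ω hω k]
  simp [Category.assoc, IsIso.inv_comp]
  erw [Category.assoc]

theorem Phi_comm2 (k : ℕ) (α : fgmk p x₀ (y0 p x₀) ⟶ fgmk p x₀ (y0 p x₀)) :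
    Phi p x₀ f hf ω hω 1 (Phi p x₀ f hf ω hω k α) = Phi p x₀ f hf ω hω (k + 1) α := by
  simp only [Phi, M_comp, M_inv, M_M_1k p x₀ f hf k]
  have hIV : inv (M p x₀ (fk p x₀ f hf 1) (Ak p x₀ f hf ω hω k)) ≫ inv (Ak p x₀ f hf ω hω 1)
      = inv (Ak p x₀ f hf ω hω 1 ≫ M p x₀ (fk p x₀ f hf 1) (Ak p x₀ f hf ω hω k)) := by
    exact IsIso.inv_comp.symm
  simp only [Category.assoc] at hIV ⊢
  rw [← Category.assoc, A1_M p x₀ f hf ω hω k, hIV]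
  simp only [A1_M p x₀ f hf ω hω k]
  erw [IsIso.inv_comp, inv_eqToHom]
  simp only [Category.assoc]
  erw [eqToHom_trans_assoc, eqToHom_refl, Category.id_comp, eqToHom_trans_assoc, eqToHom_refl,
    Category.id_comp]

end GammaCommAux
namespace GammaCommAux

variable {E B : Type} [TopologicalSpace E] [TopologicalSpace B]
variable (p : C(E, B)) (x₀ : E) (f : C(E, E)) (hf : ∀ x, p (f x) = p x)
variable (ω : Path x₀ (f x₀)) (hω : ∀ t, p (ω t) = p x₀)

/-- The class of a lifted fiber loop. -/
noncomputable def Th (θ : FiberLoop p x₀) :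
    fgmk p x₀ (y0 p x₀) ⟶ fgmk p x₀ (y0 p x₀) :=
  qh p x₀ (liftPath p x₀ θ.1 θ.2)

theorem lift_fpow (k : ℕ) (L : Path x₀ x₀) (hL : ∀ t, p (L t) = p x₀)
    (h' : ∀ t, p (fpowLoop f ω k L t) = p x₀) :
    qh p x₀ (liftPath p x₀ (fpowLoop f ω k L) h')
      = Phi p x₀ f hf ω hω k (qh p x₀ (liftPath p x₀ L hL)) := by
  have h'' : ∀ t, p ((((nPath f ω k).trans (L.map (f.continuous.iterate k))).trans
      (nPath f ω k).symm) t) = p x₀ := h'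
  show qh p x₀ (liftPath p x₀
      (((nPath f ω k).trans (L.map (f.continuous.iterate k))).trans (nPath f ω k).symm)
      h'') = _
  rw [lift_trans p x₀ _ _
      (fiber_trans (fiber_nPath hf hω k) (fiber_map hf hL k))
      (fiber_symm (fiber_nPath hf hω k)),
    lift_trans p x₀ _ _ (fiber_nPath hf hω k) (fiber_map hf hL k),
    lift_map p x₀ f hf L hL k,
    lift_symm p x₀ _ (fiber_nPath hf hω k),
    q_trans, q_trans, q_symm]
  erw [Category.assoc]
  rfl

theorem lift_gammaAux (m : ℕ) (θ : FiberLoop p x₀) : ∀ j : ℕ,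
    qh p x₀ (liftPath p x₀ (gammaAux f ω m (fpowLoop f ω 1 θ.1) j)
        (fiber_gammaAux hf hω m (fpowFiberLoop p f hf ω hω 1 θ) j))
      = Phi p x₀ f hf ω hω 1
          (qh p x₀ (liftPath p x₀ (gammaAux f ω m θ.1 j) (fiber_gammaAux hf hω m θ j)))
  | 0 => by
    have h0 : qh p x₀ (liftPath p x₀ (gammaAux f ω m θ.1 0) (fiber_gammaAux hf hω m θ 0))
        = 𝟙 (fgmk p x₀ (y0 p x₀)) := rfl
    erw [h0, Phi_one]
  | (j + 1) => by
    show qh p x₀ (liftPath p x₀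
        ((gammaAux f ω m (fpowLoop f ω 1 θ.1) j).trans
          (fpowLoop f ω (j * m) (fpowLoop f ω 1 θ.1)))
        (fiber_gammaAux hf hω m (fpowFiberLoop p f hf ω hω 1 θ) (j + 1)))
      = Phi p x₀ f hf ω hω 1 (qh p x₀ (liftPath p x₀
          ((gammaAux f ω m θ.1 j).trans (fpowLoop f ω (j * m) θ.1))
          (fiber_gammaAux hf hω m θ (j + 1))))
    erw [lift_trans p x₀ (gammaAux f ω m (fpowLoop f ω 1 θ.1) j)
        (fpowLoop f ω (j * m) (fpowLoop f ω 1 θ.1))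
        (fiber_gammaAux hf hω m (fpowFiberLoop p f hf ω hω 1 θ) j)
        (fpowFiberLoop p f hf ω hω (j * m) (fpowFiberLoop p f hf ω hω 1 θ)).2,
      lift_trans p x₀ (gammaAux f ω m θ.1 j) (fpowLoop f ω (j * m) θ.1)
        (fiber_gammaAux hf hω m θ j)
        (fpowFiberLoop p f hf ω hω (j * m) θ).2,
      q_trans, q_trans, Phi_mul,
      lift_gammaAux m θ j,
      lift_fpow p x₀ f hf ω hω (j * m) (fpowLoop f ω 1 θ.1)
        (fpowFiberLoop p f hf ω hω 1 θ).2
        (fpowFiberLoop p f hf ω hω (j * m) (fpowFiberLoop p f hf ω hω 1 θ)).2,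
      lift_fpow p x₀ f hf ω hω (j * m) θ.1 θ.2
        (fpowFiberLoop p f hf ω hω (j * m) θ).2,
      lift_fpow p x₀ f hf ω hω 1 θ.1 θ.2 (fpowFiberLoop p f hf ω hω 1 θ).2,
      Phi_comm1, Phi_comm2]
    rfl

theorem main_identity (m n : ℕ) (θ : FiberLoop p x₀) :
    qh p x₀ (liftPath p x₀
        (gammaFiberLoop p f hf ω hω m n (fpowFiberLoop p f hf ω hω 1 θ)).1
        (gammaFiberLoop p f hf ω hω m n (fpowFiberLoop p f hf ω hω 1 θ)).2)
      = qh p x₀ (liftPath p x₀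
          (fpowFiberLoop p f hf ω hω 1 (gammaFiberLoop p f hf ω hω m n θ)).1
          (fpowFiberLoop p f hf ω hω 1 (gammaFiberLoop p f hf ω hω m n θ)).2) := by
  have h1 := lift_gammaAux p x₀ f hf ω hω m θ (n / m)
  have h2 := lift_fpow p x₀ f hf ω hω 1
    (gammaLoop f ω m n θ.1) (gammaFiberLoop p f hf ω hω m n θ).2
    (fpowFiberLoop p f hf ω hω 1 (gammaFiberLoop p f hf ω hω m n θ)).2
  have h3 : Phi p x₀ f hf ω hω 1
      (qh p x₀ (liftPath p x₀ (gammaLoop f ω m n θ.1) (gammaFiberLoop p f hf ω hω m n θ).2))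
      = Phi p x₀ f hf ω hω 1 (qh p x₀ (liftPath p x₀ (gammaAux f ω m θ.1 (n / m))
          (fiber_gammaAux hf hω m θ (n / m)))) := rfl
  exact (h1.trans h3.symm).trans h2.symm

theorem main_homotopic (m n : ℕ) (θ : FiberLoop p x₀) :
    Path.Homotopic
      (liftPath p x₀
        (gammaFiberLoop p f hf ω hω m n (fpowFiberLoop p f hf ω hω 1 θ)).1
        (gammaFiberLoop p f hf ω hω m n (fpowFiberLoop p f hf ω hω 1 θ)).2)
      (liftPath p x₀
        (fpowFiberLoop p f hf ω hω 1 (gammaFiberLoop p f hf ω hω m n θ)).1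
        (fpowFiberLoop p f hf ω hω 1 (gammaFiberLoop p f hf ω hω m n θ)).2) :=
  Quotient.exact (main_identity p x₀ f hf ω hω m n θ)

include hf hω in
theorem rel_of_homotopic (n : ℕ) (θ θ' : FiberLoop p x₀)
    (h : Path.Homotopic (liftPath p x₀ θ.1 θ.2) (liftPath p x₀ θ'.1 θ'.2)) :
    ReidemeisterRelB p (iterC f n) (nPath f ω n) θ θ' := by
  have h2 : Path.Homotopic
      ((liftPath p x₀ θ.1 θ.2).trans (liftPath p x₀ (nPath f ω n) (fiber_nPath hf hω n)))
      ((liftPath p x₀ θ'.1 θ'.2).trans (liftPath p x₀ (nPath f ω n) (fiber_nPath hf hω n))) :=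
    h.hcomp (Path.Homotopic.refl _)
  obtain ⟨K⟩ := h2
  refine ⟨Path.refl x₀,
    ⟨fun z => (K z).1, continuous_subtype_val.comp K.continuous⟩, ?_, ?_, ?_, ?_, ?_⟩
  · intro t
    show (K (t, 0)).1 = _
    rw [Path.Homotopy.source K t]
    rfl
  · intro s
    show (K (0, s)).1 = _
    rw [K.apply_zero s, ← lift_trans p x₀ θ.1 (nPath f ω n) θ.2 (fiber_nPath hf hω n)
      (fiber_trans θ.2 (fiber_nPath hf hω n))]
    rfl
  · intro t
    show (K (t, 1)).1 = _
    rw [Path.Homotopy.target K t]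
    rfl
  · intro s
    show (K (1, s)).1 = _
    rw [K.apply_one s, ← lift_trans p x₀ θ'.1 (nPath f ω n) θ'.2 (fiber_nPath hf hω n)
      (fiber_trans θ'.2 (fiber_nPath hf hω n))]
    rfl
  · intro t s
    exact (K (t, s)).2

end GammaCommAux

theorem gamma_commutes_with_fOmega {E B : Type} [TopologicalSpace E] [TopologicalSpace B]
    [CompactSpace E] [CompactSpace B] [PathConnectedSpace E] [PathConnectedSpace B]
    [T2Space E] [T2Space B] {dE dB : ℕ}
    [ChartedSpace (EuclideanSpace ℝ (Fin dE)) E]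
    [ChartedSpace (EuclideanSpace ℝ (Fin dB)) B]
    (p : C(E, B)) (hp : IsHurewiczFibration p)
    (f : C(E, E)) (hf : ∀ x, p (f x) = p x)
    (x₀ : E) (ω : Path x₀ (f x₀)) (hω : ∀ t, p (ω t) = p x₀)
    (m n : ℕ) (hm : 0 < m) (hmn : m ∣ n) :
    ∀ (G : ReidemeisterSetB p (iterC f m) (nPath f ω m) →
        ReidemeisterSetB p (iterC f n) (nPath f ω n))
      (Fm : ReidemeisterSetB p (iterC f m) (nPath f ω m) →
        ReidemeisterSetB p (iterC f m) (nPath f ω m))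
      (Fn : ReidemeisterSetB p (iterC f n) (nPath f ω n) →
        ReidemeisterSetB p (iterC f n) (nPath f ω n)),
      IsGammaMap p f hf ω hω m n G → IsFOmegaMap p f hf ω hω m Fm →
      IsFOmegaMap p f hf ω hω n Fn →
      G ∘ Fm = Fn ∘ G ∧
      ∀ a : ReidemeisterSetB p (iterC f n) (nPath f ω n),
        a ∈ Set.range G → ∀ r : ℕ, Fn^[r] a ∈ Set.range G := by
  intro G Fm Fn hG hFm hFn
  have hcomm : G ∘ Fm = Fn ∘ G := by
    funext a
    obtain ⟨θ, rfl⟩ := Quot.exists_rep a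
    show G (Fm (Quot.mk _ θ)) = Fn (G (Quot.mk _ θ))
    rw [hFm θ, hG (fpowFiberLoop p f hf ω hω 1 θ), hG θ,
      hFn (gammaFiberLoop p f hf ω hω m n θ)]
    exact Quot.sound (GammaCommAux.rel_of_homotopic p x₀ f hf ω hω n _ _
      (GammaCommAux.main_homotopic p x₀ f hf ω hω m n θ))
  refine ⟨hcomm, ?_⟩
  rintro a ⟨b, rfl⟩ r
  have key : ∀ (r : ℕ) b, Fn^[r] (G b) = G (Fm^[r] b) := by
    intro r
    induction r with
    | zero => intro b; rfl
    | succ r ih =>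
      intro b
      rw [Function.iterate_succ_apply, Function.iterate_succ_apply]
      have h : G (Fm b) = Fn (G b) := congrFun hcomm b
      rw [← h, ih (Fm b)]
  exact ⟨Fm^[r] b, (key r b).symm⟩
end
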